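/- arXiv:1407.8068 — 5 statements merged into one kernel-verified Lean document; each statement's English description precedes it below -/
import Mathlib

section
/- Let γ ∈ (0,1), α := H−1/2, and let N ≥ 2 be an integer with ⌊γN⌋ ≥ 1. For every integer k ≥ 1 one has ∑_{i=⌊γN⌋+1}^{⌊γN⌋+k−1} j_{⌊γN⌋+k}(i) ≤ c_* · ((⌊γN⌋+k)^{α}/⌊γN⌋^{α}) · k^{α}, where c_* := σ·c_H and the sum is empty (equal to 0) when k = 1. -/
open MeasureTheory

/-- The normalizing constant `c_H`. -/
noncomputable def cH (H : ℝ) : ℝ :=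
  Real.sqrt (2 * H * Real.Gamma (3/2 - H) / (Real.Gamma (H + 1/2) * Real.Gamma (2 - 2*H)))

/-- The coefficient `j_n(i)` of the disturbed random walk. -/
noncomputable def jn (H σ : ℝ) (n i : ℕ) : ℝ :=
  σ * cH H * (H - 1/2) *
    ∫ x in ((i : ℝ) - 1)..(i : ℝ),
      x ^ ((1:ℝ)/2 - H) *
        ∫ v in (0:ℝ)..1, (v + n - 1) ^ (H - 1/2) * (v + n - 1 - x) ^ (H - 3/2)

/-- The coefficient `g_n` of the disturbed random walk. -/
noncomputable def gn (H σ : ℝ) (n : ℕ) : ℝ :=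
  σ * cH H * (H - 1/2) *
    ∫ x in ((n : ℝ) - 1)..(n : ℝ),
      x ^ ((1:ℝ)/2 - H) * ((n : ℝ) - x) ^ (H - 1/2) *
        ∫ y in (0:ℝ)..1, (y * ((n : ℝ) - x) + x) ^ (H - 1/2) * y ^ (H - 3/2)

lemma myJ_eval (H : ℝ) (hH : (1:ℝ)/2 < H) (c : ℝ) :
    ∫ v in (0:ℝ)..1, (v + c) ^ (H - 3/2) = ((1+c) ^ (H-1/2) - c ^ (H-1/2)) / (H-1/2) := by
  rw [intervalIntegral.integral_comp_add_right (fun u => u ^ (H - 3/2)) c,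
    integral_rpow (Or.inl (by linarith))]
  rw [show H - 3/2 + 1 = H - 1/2 by ring, zero_add]

lemma myJ_int (H : ℝ) (hH : (1:ℝ)/2 < H) (c a b : ℝ) :
    IntervalIntegrable (fun v => (v + c) ^ (H - 3/2)) volume a b := by
  have h := (intervalIntegral.intervalIntegrable_rpow' (a := a + c) (b := b + c)
    (r := H - 3/2) (by linarith)).comp_add_right c
  simpa using h

lemma my_key_num (α t : ℝ) (hα : 0 < α) (ht : 1 ≤ t) :
    (t ^ (α+1) - 1 - (t-1) ^ (α+1)) / (α+1) ≤ t ^ α := by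
  have ht0 : (0:ℝ) ≤ t - 1 := by linarith
  have h1 : t ^ (α+1) - (t-1) ^ (α+1) = (α+1) * ∫ x in (t-1)..t, x ^ α := by
    rw [integral_rpow (Or.inl (by linarith))]
    field_simp
  have h2 : ∫ x in (t-1)..t, x ^ α ≤ ∫ x in (t-1)..t, t ^ α := by
    apply intervalIntegral.integral_mono_on (by linarith)
      (intervalIntegral.intervalIntegrable_rpow' (by linarith))
      intervalIntegrable_const
    intro x hx
    exact Real.rpow_le_rpow (by linarith [hx.1]) hx.2 hα.le
  rw [intervalIntegral.integral_const] at h2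
  have h3 : (t - (t-1)) • t ^ α = t ^ α := by norm_num
  rw [h3] at h2
  have htα : (0:ℝ) ≤ t ^ α := Real.rpow_nonneg (by linarith) _
  rw [div_le_iff₀ (by linarith)]
  nlinarith

noncomputable def Gaux (H : ℝ) (m n : ℕ) (x : ℝ) : ℝ :=
  (m:ℝ) ^ ((1:ℝ)/2 - H) * ((n:ℝ) ^ (H - 1/2) *
    ((((n:ℝ) - x) ^ (H - 1/2) - ((n:ℝ) - 1 - x) ^ (H - 1/2)) / (H - 1/2)))

lemma Gaux_int (H : ℝ) (hH : (1:ℝ)/2 < H) (m n : ℕ) (a b : ℝ) :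
    IntervalIntegrable (Gaux H m n) volume a b := by
  have h1 : IntervalIntegrable (fun x => ((n:ℝ) - x) ^ (H - 1/2)) volume a b := by
    have := (intervalIntegral.intervalIntegrable_rpow' (a := (n:ℝ) - a) (b := (n:ℝ) - b)
      (r := H - 1/2) (by linarith)).comp_sub_left (n:ℝ)
    simpa using this
  have h2 : IntervalIntegrable (fun x => ((n:ℝ) - 1 - x) ^ (H - 1/2)) volume a b := by
    have := (intervalIntegral.intervalIntegrable_rpow' (a := (n:ℝ) - 1 - a) (b := (n:ℝ) - 1 - b)
      (r := H - 1/2) (by linarith)).comp_sub_left ((n:ℝ) - 1)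
    simpa using this
  have h3 := ((h1.sub h2).const_mul ((m:ℝ) ^ ((1:ℝ)/2 - H) * (n:ℝ) ^ (H - 1/2) / (H - 1/2)))
  have heq : Gaux H m n = fun x => ((m:ℝ) ^ ((1:ℝ)/2 - H) * (n:ℝ) ^ (H - 1/2) / (H - 1/2)) *
      ((((n:ℝ) - x) ^ (H - 1/2)) - (((n:ℝ) - 1 - x) ^ (H - 1/2))) := by
    funext x; unfold Gaux; ring
  rw [heq]; exact h3

lemma jn_le_G (H σ : ℝ) (hH : H ∈ Set.Ioo (1/2:ℝ) 1) (hσ : 0 < σ)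
    (m n i : ℕ) (hm : 1 ≤ m) (hi1 : m + 1 ≤ i) (hi2 : i + 1 ≤ n) :
    jn H σ n i ≤ σ * cH H * (H - 1/2) * ∫ x in ((i:ℝ)-1)..(i:ℝ), Gaux H m n x := by
  obtain ⟨hH1, hH2⟩ := hH
  have hcH : 0 ≤ cH H := Real.sqrt_nonneg _
  have hc : 0 ≤ σ * cH H * (H - 1/2) := mul_nonneg (mul_nonneg hσ.le hcH) (by linarith)
  unfold jn
  apply mul_le_mul_of_nonneg_left _ hc
  have him : (m:ℝ) + 1 ≤ (i:ℝ) := by exact_mod_cast hi1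
  have hin : (i:ℝ) + 1 ≤ (n:ℝ) := by exact_mod_cast hi2
  have hm1 : (1:ℝ) ≤ (m:ℝ) := by exact_mod_cast hm
  have hab : ((i:ℝ) - 1) ≤ (i:ℝ) := by linarith
  rw [intervalIntegral.integral_of_le hab, intervalIntegral.integral_of_le hab]
  apply integral_mono_of_nonneg
  · refine ae_restrict_of_forall_mem measurableSet_Ioc fun x hx' => ?_
    simp only [Pi.zero_apply]
    have hx0 : (0:ℝ) < x := by have := hx'.1; linarith
    have hIn : 0 ≤ ∫ v in (0:ℝ)..1, (v + (n:ℝ) - 1) ^ (H - 1/2) * (v + (n:ℝ) - 1 - x) ^ (H - 3/2) := by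
      apply intervalIntegral.integral_nonneg (by norm_num)
      intro v hv
      have h1 : (0:ℝ) ≤ v + (n:ℝ) - 1 := by have := hv.1; linarith
      have h2 : (0:ℝ) ≤ v + (n:ℝ) - 1 - x := by have := hv.1; have := hx'.2; linarith
      exact mul_nonneg (Real.rpow_nonneg h1 _) (Real.rpow_nonneg h2 _)
    exact mul_nonneg (Real.rpow_nonneg hx0.le _) hIn
  · exact (Gaux_int H hH1 m n _ _).1
  · refine ae_restrict_of_forall_mem measurableSet_Ioc fun x hx' => ?_
    have hx0 : (0:ℝ) < x := by have := hx'.1; linarith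
    have hxm : (m:ℝ) ≤ x := by have := hx'.1; linarith
    have hxn : x ≤ (n:ℝ) - 1 := by have := hx'.2; linarith
    have hIn : 0 ≤ ∫ v in (0:ℝ)..1, (v + (n:ℝ) - 1) ^ (H - 1/2) * (v + (n:ℝ) - 1 - x) ^ (H - 3/2) := by
      apply intervalIntegral.integral_nonneg (by norm_num)
      intro v hv
      have h1 : (0:ℝ) ≤ v + (n:ℝ) - 1 := by have := hv.1; linarith
      have h2 : (0:ℝ) ≤ v + (n:ℝ) - 1 - x := by have := hv.1; linarith
      exact mul_nonneg (Real.rpow_nonneg h1 _) (Real.rpow_nonneg h2 _)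
    have step1 : (∫ v in (0:ℝ)..1, (v + (n:ℝ) - 1) ^ (H - 1/2) * (v + (n:ℝ) - 1 - x) ^ (H - 3/2))
        ≤ ∫ v in (0:ℝ)..1, (n:ℝ) ^ (H - 1/2) * (v + ((n:ℝ) - 1 - x)) ^ (H - 3/2) := by
      rw [intervalIntegral.integral_of_le (by norm_num : (0:ℝ) ≤ 1),
          intervalIntegral.integral_of_le (by norm_num : (0:ℝ) ≤ 1)]
      apply integral_mono_of_nonneg
      · refine ae_restrict_of_forall_mem measurableSet_Ioc fun v hv' => ?_
        simp only [Pi.zero_apply]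
        have h1 : (0:ℝ) ≤ v + (n:ℝ) - 1 := by have := hv'.1; linarith
        have h2 : (0:ℝ) ≤ v + (n:ℝ) - 1 - x := by have := hv'.1; linarith
        exact mul_nonneg (Real.rpow_nonneg h1 _) (Real.rpow_nonneg h2 _)
      · exact ((myJ_int H hH1 ((n:ℝ)-1-x) 0 1).const_mul _).1
      · refine ae_restrict_of_forall_mem measurableSet_Ioc fun v hv' => ?_
        have h1 : (0:ℝ) ≤ v + (n:ℝ) - 1 := by have := hv'.1; linarith
        have h2 : v + (n:ℝ) - 1 ≤ (n:ℝ) := by have := hv'.2; linarith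
        have h3 : (0:ℝ) ≤ v + ((n:ℝ) - 1 - x) := by have := hv'.1; linarith
        have heq : v + (n:ℝ) - 1 - x = v + ((n:ℝ) - 1 - x) := by ring
        show (v + (n:ℝ) - 1) ^ (H - 1/2) * (v + (n:ℝ) - 1 - x) ^ (H - 3/2)
          ≤ (n:ℝ) ^ (H - 1/2) * (v + ((n:ℝ) - 1 - x)) ^ (H - 3/2)
        rw [heq]
        exact mul_le_mul_of_nonneg_right (Real.rpow_le_rpow h1 h2 (by linarith))
          (Real.rpow_nonneg h3 _)
    rw [intervalIntegral.integral_const_mul, myJ_eval H hH1 ((n:ℝ)-1-x),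
      show (1:ℝ) + ((n:ℝ)-1-x) = (n:ℝ) - x by ring] at step1
    unfold Gaux
    have hxpow : x ^ ((1:ℝ)/2 - H) ≤ (m:ℝ) ^ ((1:ℝ)/2 - H) :=
      Real.rpow_le_rpow_of_nonpos (by linarith) hxm (by linarith)
    exact mul_le_mul hxpow step1 hIn (Real.rpow_nonneg (by linarith) _)

lemma Gaux_eq (H : ℝ) (m n : ℕ) (x : ℝ) :
    Gaux H m n x = ((m:ℝ) ^ ((1:ℝ)/2 - H) * (n:ℝ) ^ (H - 1/2) / (H - 1/2)) *
      (((n:ℝ) - x) ^ (H - 1/2) - ((n:ℝ) - 1 - x) ^ (H - 1/2)) := by unfold Gaux; ring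

lemma A_int (H : ℝ) (hH1 : (1:ℝ)/2 < H) (c a b : ℝ) :
    IntervalIntegrable (fun x => (c - x) ^ (H - 1/2)) volume a b := by
  have := (intervalIntegral.intervalIntegrable_rpow' (a := c - a) (b := c - b)
    (r := H - 1/2) (by linarith)).comp_sub_left c
  simpa using this

lemma Gaux_integral_eval (H : ℝ) (hH1 : (1:ℝ)/2 < H) (m k : ℕ) (hm : 1 ≤ m) (hk : 1 ≤ k) :
    ∫ x in (m:ℝ)..((m:ℝ) + k - 1), Gaux H m (m+k) x
      = ((m:ℝ) ^ ((1:ℝ)/2 - H) * ((m+k:ℕ):ℝ) ^ (H - 1/2) / (H - 1/2)) *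
        (((k:ℝ) ^ (H + 1/2) - 1 - ((k:ℝ) - 1) ^ (H + 1/2)) / (H + 1/2)) := by
  have hk1 : (1:ℝ) ≤ (k:ℝ) := by exact_mod_cast hk
  have hcast : ((m+k:ℕ):ℝ) = (m:ℝ) + (k:ℝ) := by push_cast; ring
  have hA : ∫ x in (m:ℝ)..((m:ℝ) + k - 1), (((m+k:ℕ):ℝ) - x) ^ (H - 1/2)
      = ((k:ℝ) ^ (H + 1/2) - 1) / (H + 1/2) := by
    rw [intervalIntegral.integral_comp_sub_left (fun u => u ^ (H - 1/2)) (((m+k:ℕ):ℝ))]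
    rw [show ((m+k:ℕ):ℝ) - ((m:ℝ) + k - 1) = 1 by rw [hcast]; ring,
      show ((m+k:ℕ):ℝ) - (m:ℝ) = (k:ℝ) by rw [hcast]; ring,
      integral_rpow (Or.inl (by linarith))]
    rw [Real.one_rpow, show H - 1/2 + 1 = H + 1/2 by ring]
  have hB : ∫ x in (m:ℝ)..((m:ℝ) + k - 1), (((m+k:ℕ):ℝ) - 1 - x) ^ (H - 1/2)
      = ((k:ℝ) - 1) ^ (H + 1/2) / (H + 1/2) := by
    have : ∀ x : ℝ, ((m+k:ℕ):ℝ) - 1 - x = (((m+k:ℕ):ℝ) - 1) - x := fun x => by ring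
    rw [intervalIntegral.integral_comp_sub_left (fun u => u ^ (H - 1/2)) (((m+k:ℕ):ℝ) - 1)]
    rw [show ((m+k:ℕ):ℝ) - 1 - ((m:ℝ) + k - 1) = 0 by rw [hcast]; ring,
      show ((m+k:ℕ):ℝ) - 1 - (m:ℝ) = (k:ℝ) - 1 by rw [hcast]; ring,
      integral_rpow (Or.inl (by linarith))]
    rw [show H - 1/2 + 1 = H + 1/2 by ring, Real.zero_rpow (by positivity : (0:ℝ) < H + 1/2).ne']
    ring
  simp only [Gaux_eq]
  rw [intervalIntegral.integral_const_mul,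
    intervalIntegral.integral_sub (A_int H hH1 _ _ _) (A_int H hH1 _ _ _), hA, hB]
  ring

/-- Estimate (4.6) (`sum2`): for `γ ∈ (0,1)`, `N ≥ 2` with `⌊γN⌋ ≥ 1` and `k ≥ 1`,
`∑_{i=⌊γN⌋+1}^{⌊γN⌋+k-1} j_{⌊γN⌋+k}(i) ≤ c_* ((⌊γN⌋+k)^α / ⌊γN⌋^α) k^α`
with `α = H - 1/2` and `c_* = σ c_H`. -/
theorem sum_jn_gamma_upper (H σ : ℝ) (hH : H ∈ Set.Ioo (1/2 : ℝ) 1) (hσ : 0 < σ)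
    (γ : ℝ) (hγ : γ ∈ Set.Ioo (0:ℝ) 1) (N : ℕ) (hN : 2 ≤ N) (hfloor : 1 ≤ ⌊γ * N⌋₊)
    (k : ℕ) (hk : 1 ≤ k) :
    ∑ i ∈ Finset.Icc (⌊γ * N⌋₊ + 1) (⌊γ * N⌋₊ + k - 1), jn H σ (⌊γ * N⌋₊ + k) i
      ≤ σ * cH H * (((⌊γ * N⌋₊ : ℝ) + k) ^ (H - 1/2) / (⌊γ * N⌋₊ : ℝ) ^ (H - 1/2))
          * (k : ℝ) ^ (H - 1/2) := by
  obtain ⟨hH1, hH2⟩ := hH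
  set m := ⌊γ * N⌋₊ with hmdef
  have hcH : 0 ≤ cH H := Real.sqrt_nonneg _
  have hm1 : (1:ℝ) ≤ (m:ℝ) := by exact_mod_cast hfloor
  have hk1 : (1:ℝ) ≤ (k:ℝ) := by exact_mod_cast hk
  have hc : 0 ≤ σ * cH H * (H - 1/2) := mul_nonneg (mul_nonneg hσ.le hcH) (by linarith)
  have hsum : ∑ i ∈ Finset.Icc (m+1) (m+k-1), jn H σ (m+k) i
      ≤ ∑ i ∈ Finset.Icc (m+1) (m+k-1),
          σ * cH H * (H-1/2) * ∫ x in ((i:ℝ)-1)..(i:ℝ), Gaux H m (m+k) x := by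
    apply Finset.sum_le_sum
    intro i hi
    rw [Finset.mem_Icc] at hi
    exact jn_le_G H σ ⟨hH1, hH2⟩ hσ m (m+k) i hfloor hi.1 (by omega)
  have hadj : ∑ i ∈ Finset.Icc (m+1) (m+k-1), (∫ x in ((i:ℝ)-1)..(i:ℝ), Gaux H m (m+k) x)
      = ∫ x in (m:ℝ)..((m:ℝ) + k - 1), Gaux H m (m+k) x := by
    have h1 : Finset.Icc (m+1) (m+k-1) = Finset.Ico (m+1) (m+k) := by
      rw [← Finset.Ico_add_one_right_eq_Icc]; congr 1; omega
    rw [h1, Finset.sum_Ico_eq_sum_range, show m + k - (m+1) = k - 1 by omega]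
    have h2 : ∀ j ∈ Finset.range (k-1),
        (∫ x in ((↑(m+1+j):ℝ)-1)..(↑(m+1+j):ℝ), Gaux H m (m+k) x)
          = ∫ x in ((m:ℝ) + (j:ℕ))..((m:ℝ) + (↑(j+1):ℕ)), Gaux H m (m+k) x := by
      intro j _
      rw [show ((↑(m+1+j):ℕ):ℝ) - 1 = (m:ℝ) + (j:ℝ) by push_cast; ring,
        show ((↑(m+1+j):ℕ):ℝ) = (m:ℝ) + ((↑(j+1):ℕ):ℝ) by push_cast; ring]
    rw [Finset.sum_congr rfl h2,
      intervalIntegral.sum_integral_adjacent_intervals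
        (a := fun j => (m:ℝ) + (j:ℕ)) (n := k-1)
        (fun j _ => Gaux_int H hH1 m (m+k) _ _)]
    norm_num
    congr 1
    push_cast [Nat.cast_sub hk]
    ring
  have heval := Gaux_integral_eval H hH1 m k hfloor hk
  have hX := my_key_num (H - 1/2) (k:ℝ) (by linarith) hk1
  rw [show H - 1/2 + 1 = H + 1/2 by ring] at hX
  have hmpos : (0:ℝ) < (m:ℝ) := by linarith
  have hminv : (m:ℝ) ^ ((1:ℝ)/2 - H) = ((m:ℝ) ^ (H - 1/2))⁻¹ := by
    rw [← Real.rpow_neg hmpos.le]; congr 1; ring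
  have hfin : σ * cH H * (H-1/2) *
      (((m:ℝ) ^ ((1:ℝ)/2 - H) * ((m+k:ℕ):ℝ) ^ (H - 1/2) / (H - 1/2)) *
        (((k:ℝ) ^ (H + 1/2) - 1 - ((k:ℝ) - 1) ^ (H + 1/2)) / (H + 1/2)))
      ≤ σ * cH H * (((m:ℝ) + k) ^ (H - 1/2) / (m:ℝ) ^ (H - 1/2)) * (k:ℝ) ^ (H - 1/2) := by
    have hcast : ((m+k:ℕ):ℝ) = (m:ℝ) + (k:ℝ) := by push_cast; ring
    rw [hcast, hminv]
    have h0 : H - 1/2 ≠ 0 := (by linarith : (0:ℝ) < H - 1/2).ne'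
    have hkey : σ * cH H * (H-1/2) *
        ((((m:ℝ) ^ (H - 1/2))⁻¹ * ((m:ℝ) + k) ^ (H - 1/2) / (H - 1/2)) *
          (((k:ℝ) ^ (H + 1/2) - 1 - ((k:ℝ) - 1) ^ (H + 1/2)) / (H + 1/2)))
        = σ * cH H * (((m:ℝ) + k) ^ (H - 1/2) / (m:ℝ) ^ (H - 1/2)) *
            (((k:ℝ) ^ (H + 1/2) - 1 - ((k:ℝ) - 1) ^ (H + 1/2)) / (H + 1/2)) := by
      have e1 : σ * cH H * (H-1/2) *
          ((((m:ℝ) ^ (H - 1/2))⁻¹ * ((m:ℝ) + k) ^ (H - 1/2) / (H - 1/2)) *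
            (((k:ℝ) ^ (H + 1/2) - 1 - ((k:ℝ) - 1) ^ (H + 1/2)) / (H + 1/2)))
          = σ * cH H * ((H-1/2) * (H-1/2)⁻¹) *
              (((m:ℝ) + k) ^ (H - 1/2) * ((m:ℝ) ^ (H - 1/2))⁻¹) *
              (((k:ℝ) ^ (H + 1/2) - 1 - ((k:ℝ) - 1) ^ (H + 1/2)) / (H + 1/2)) := by
        simp only [div_eq_mul_inv]; ring
      rw [e1, mul_inv_cancel₀ h0, mul_one, ← div_eq_mul_inv]
    rw [hkey]
    apply mul_le_mul_of_nonneg_left hX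
    have h1 : (0:ℝ) ≤ ((m:ℝ) + k) ^ (H - 1/2) := Real.rpow_nonneg (by linarith) _
    have h2 : (0:ℝ) ≤ (m:ℝ) ^ (H - 1/2) := Real.rpow_nonneg hmpos.le _
    exact mul_nonneg (mul_nonneg hσ.le hcH) (div_nonneg h1 h2)
  calc ∑ i ∈ Finset.Icc (m+1) (m+k-1), jn H σ (m+k) i
      ≤ ∑ i ∈ Finset.Icc (m+1) (m+k-1),
          σ * cH H * (H-1/2) * ∫ x in ((i:ℝ)-1)..(i:ℝ), Gaux H m (m+k) x := hsum
    _ = σ * cH H * (H-1/2) *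
          ∑ i ∈ Finset.Icc (m+1) (m+k-1), ∫ x in ((i:ℝ)-1)..(i:ℝ), Gaux H m (m+k) x := by
        rw [Finset.mul_sum]
    _ = σ * cH H * (H-1/2) *
          (((m:ℝ) ^ ((1:ℝ)/2 - H) * ((m+k:ℕ):ℝ) ^ (H - 1/2) / (H - 1/2)) *
            (((k:ℝ) ^ (H + 1/2) - 1 - ((k:ℝ) - 1) ^ (H + 1/2)) / (H + 1/2))) := by
        rw [hadj, heval]
    _ ≤ _ := hfin
end

section
/- Let N ≥ 1, s₀ > 0, and let n, m ≥ 1 be integers with n + m ≤ N. Assume that 1 + (∑_{i=1}^{k−1} j_k(i)·y_i + g_k·y_k)/N^H > 0 for every k ≤ n+m and every (y_1,…,y_k) ∈ {−1,1}^k. Then for every sign vector x ∈ {−1,1}^m one has S_{n+m}^{(N)}(−1,…,−1, x_1,…, x_m) ≤ S_n^{(N)}(−1,…,−1) · ∏_{k=1}^{m} (1 + B_n^N(k)/N^H), where B_n^N(k) := −∑_{i=1}^{n} j_{n+k}(i) + ∑_{i=n+1}^{n+k−1} j_{n+k}(i) + g_{n+k} (i.e., among all continuations of the all-down path of length n, the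 all-up continuation maximizes the stock price). -/
open MeasureTheory

/-- The stock price in the `N`-fractional binary market after `n` steps along the
sign path `x` (indexed from 1):
`S_n^{(N)}(x) = s₀ ∏_{k=1}^n (1 + (∑_{i=1}^{k-1} j_k(i) x_i + g_k x_k)/N^H)`. -/
noncomputable def Sp (H σ : ℝ) (N : ℕ) (s₀ : ℝ) (n : ℕ) (x : ℕ → ℝ) : ℝ :=
  s₀ * ∏ k ∈ Finset.Icc 1 n,
    (1 + ((∑ i ∈ Finset.Icc 1 (k - 1), jn H σ k i * x i) + gn H σ k * x k) / (N : ℝ) ^ H)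

/-- The quantity `B_n^N(k) = -∑_{i=1}^{n} j_{n+k}(i) + ∑_{i=n+1}^{n+k-1} j_{n+k}(i) + g_{n+k}`. -/
noncomputable def Bfun (H σ : ℝ) (n N k : ℕ) : ℝ :=
  -(∑ i ∈ Finset.Icc 1 n, jn H σ (n + k) i)
    + (∑ i ∈ Finset.Icc (n + 1) (n + k - 1), jn H σ (n + k) i)
    + gn H σ (n + k)

lemma cH_nonneg (H : ℝ) : 0 ≤ cH H := Real.sqrt_nonneg _

lemma jn_nonneg (H σ : ℝ) (hH : H ∈ Set.Ioo (1/2 : ℝ) 1) (hσ : 0 < σ)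
    (K i : ℕ) (hi : 1 ≤ i) (hiK : i < K) : 0 ≤ jn H σ K i := by
  obtain ⟨hH1, _⟩ := hH
  have hi' : (1:ℝ) ≤ i := by exact_mod_cast hi
  have hK1 : (i : ℝ) + 1 ≤ (K : ℝ) := by exact_mod_cast hiK
  unfold jn
  apply mul_nonneg
  · apply mul_nonneg (mul_nonneg hσ.le (cH_nonneg H)); linarith
  apply intervalIntegral.integral_nonneg (by linarith : (i:ℝ) - 1 ≤ (i:ℝ))
  intro x hx
  have hx1 : (i:ℝ) - 1 ≤ x := hx.1
  have hx2 : x ≤ (i:ℝ) := hx.2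
  apply mul_nonneg (Real.rpow_nonneg (by linarith) _)
  apply intervalIntegral.integral_nonneg (by norm_num : (0:ℝ) ≤ 1)
  intro v hv
  have hv1 : (0:ℝ) ≤ v := hv.1
  exact mul_nonneg (Real.rpow_nonneg (by linarith) _)
    (Real.rpow_nonneg (by linarith) _)

lemma gn_nonneg (H σ : ℝ) (hH : H ∈ Set.Ioo (1/2 : ℝ) 1) (hσ : 0 < σ)
    (K : ℕ) (hK : 1 ≤ K) : 0 ≤ gn H σ K := by
  obtain ⟨hH1, _⟩ := hH
  have hK' : (1:ℝ) ≤ K := by exact_mod_cast hK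
  unfold gn
  apply mul_nonneg
  · apply mul_nonneg (mul_nonneg hσ.le (cH_nonneg H)); linarith
  apply intervalIntegral.integral_nonneg (by linarith : (K:ℝ) - 1 ≤ (K:ℝ))
  intro x hx
  have hx1 : (K:ℝ) - 1 ≤ x := hx.1
  have hx2 : x ≤ (K:ℝ) := hx.2
  apply mul_nonneg
  · exact mul_nonneg (Real.rpow_nonneg (by linarith) _)
      (Real.rpow_nonneg (by linarith) _)
  apply intervalIntegral.integral_nonneg (by norm_num : (0:ℝ) ≤ 1)
  intro v hv
  have hv1 : (0:ℝ) ≤ v := hv.1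
  have hv2 : v ≤ 1 := hv.2
  apply mul_nonneg
  · apply Real.rpow_nonneg
    nlinarith
  · exact Real.rpow_nonneg hv1 _

/-- One factor of the stock price product. -/
noncomputable def Ffac (H σ : ℝ) (N : ℕ) (y : ℕ → ℝ) (k : ℕ) : ℝ :=
  1 + ((∑ i ∈ Finset.Icc 1 (k - 1), jn H σ k i * y i) + gn H σ k * y k) / (N : ℝ) ^ H

lemma Sp_eq (H σ : ℝ) (N : ℕ) (s₀ : ℝ) (n : ℕ) (x : ℕ → ℝ) :
    Sp H σ N s₀ n x = s₀ * ∏ k ∈ Finset.Icc 1 n, Ffac H σ N x k := rfl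

/-- Among all continuations of the all-down path of length `n`, the all-up continuation
maximizes the stock price: for every sign vector `x ∈ {-1,1}^m`,
`S_{n+m}^{(N)}(-1,…,-1,x) ≤ S_n^{(N)}(-1,…,-1) ∏_{k=1}^m (1 + B_n^N(k)/N^H)`. -/
theorem all_up_maximizes (H σ : ℝ) (hH : H ∈ Set.Ioo (1/2 : ℝ) 1) (hσ : 0 < σ)
    (N n m : ℕ) (hn : 1 ≤ n) (hm : 1 ≤ m) (hNm : n + m ≤ N) (s₀ : ℝ) (hs₀ : 0 < s₀)
    (hpos : ∀ k : ℕ, 1 ≤ k → k ≤ n + m → ∀ y : ℕ → ℝ, (∀ i, y i = -1 ∨ y i = 1) →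
      0 < 1 + ((∑ i ∈ Finset.Icc 1 (k - 1), jn H σ k i * y i) + gn H σ k * y k) / (N : ℝ) ^ H)
    (x : ℕ → ℝ) (hx : ∀ i, x i = -1 ∨ x i = 1) :
    Sp H σ N s₀ (n + m) (fun i => if i ≤ n then -1 else x (i - n))
      ≤ Sp H σ N s₀ n (fun _ => -1)
          * ∏ k ∈ Finset.Icc 1 m, (1 + Bfun H σ n N k / (N : ℝ) ^ H) := by
  set y : ℕ → ℝ := fun i => if i ≤ n then -1 else x (i - n) with hy
  have hy' : ∀ i, y i = -1 ∨ y i = 1 := by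
    intro i
    by_cases h : i ≤ n
    · left; simp [y, h]
    · simpa [y, h] using hx (i - n)
  have hyle : ∀ i, y i ≤ 1 := by
    intro i; rcases hy' i with h | h <;> rw [h] <;> norm_num
  have hNpos : (0:ℝ) < (N : ℝ) ^ H := by
    apply Real.rpow_pos_of_pos
    have : 1 ≤ N := le_trans (by omega) hNm
    exact_mod_cast this
  have hFpos : ∀ k, 1 ≤ k → k ≤ n + m → 0 < Ffac H σ N y k := fun k h1 h2 =>
    hpos k h1 h2 y hy'
  -- splitting the index set
  have h1 : Finset.Icc 1 (n + m) = Finset.Icc 1 n ∪ Finset.Icc (n + 1) (n + m) := by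
    ext a
    simp only [Finset.mem_Icc, Finset.mem_union]
    omega
  have hdisj : Disjoint (Finset.Icc 1 n) (Finset.Icc (n + 1) (n + m)) := by
    rw [Finset.disjoint_left]
    intro a ha hb
    simp only [Finset.mem_Icc] at ha hb
    omega
  -- the first part of the product is the all-down product
  have hfirst : ∏ k ∈ Finset.Icc 1 n, Ffac H σ N y k =
      ∏ k ∈ Finset.Icc 1 n, Ffac H σ N (fun _ => -1) k := by
    apply Finset.prod_congr rfl
    intro k hk
    simp only [Finset.mem_Icc] at hk
    have hyk : y k = -1 := by simp [y, hk.2]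
    have hsumc : ∀ i ∈ Finset.Icc 1 (k - 1), jn H σ k i * y i = jn H σ k i * (-1 : ℝ) := by
      intro i hi
      simp only [Finset.mem_Icc] at hi
      have : y i = -1 := by simp [y, show i ≤ n by omega]
      rw [this]
    unfold Ffac
    beta_reduce
    rw [hyk, Finset.sum_congr rfl hsumc]
  -- reindexing the B-product
  have hreidx : ∏ k ∈ Finset.Icc 1 m, (1 + Bfun H σ n N k / (N : ℝ) ^ H)
      = ∏ k ∈ Finset.Icc (n + 1) (n + m), (1 + Bfun H σ n N (k - n) / (N : ℝ) ^ H) := by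
    apply Finset.prod_bij (fun k _ => k + n)
    · intro a ha; simp only [Finset.mem_Icc] at *; omega
    · intro a _ b _ hab; omega
    · intro b hb; simp only [Finset.mem_Icc] at hb
      exact ⟨b - n, by simp only [Finset.mem_Icc]; omega, by omega⟩
    · intro a _; simp
  -- pointwise comparison on the tail
  have hpoint : ∀ k ∈ Finset.Icc (n + 1) (n + m),
      Ffac H σ N y k ≤ 1 + Bfun H σ n N (k - n) / (N : ℝ) ^ H := by
    intro k hk
    simp only [Finset.mem_Icc] at hk
    have hk1 : n + 1 ≤ k := hk.1
    have hkB : n + (k - n) = k := by omega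
    have hkB1 : n + (k - n) - 1 = k - 1 := by omega
    have hBs : Bfun H σ n N (k - n) =
        -(∑ i ∈ Finset.Icc 1 n, jn H σ k i)
          + (∑ i ∈ Finset.Icc (n + 1) (k - 1), jn H σ k i) + gn H σ k := by
      unfold Bfun
      rw [hkB]
    -- split the sum
    have hIcc : Finset.Icc 1 (k - 1) = Finset.Icc 1 n ∪ Finset.Icc (n + 1) (k - 1) := by
      ext a
      simp only [Finset.mem_Icc, Finset.mem_union]
      omega
    have hdisj2 : Disjoint (Finset.Icc 1 n) (Finset.Icc (n + 1) (k - 1)) := by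
      rw [Finset.disjoint_left]
      intro a ha hb
      simp only [Finset.mem_Icc] at ha hb
      omega
    have hsum1 : ∑ i ∈ Finset.Icc 1 n, jn H σ k i * y i
        = -(∑ i ∈ Finset.Icc 1 n, jn H σ k i) := by
      rw [← Finset.sum_neg_distrib]
      apply Finset.sum_congr rfl
      intro i hi
      simp only [Finset.mem_Icc] at hi
      have : y i = -1 := by simp [y, hi.2]
      rw [this]; ring
    have hsum2 : ∑ i ∈ Finset.Icc (n + 1) (k - 1), jn H σ k i * y i
        ≤ ∑ i ∈ Finset.Icc (n + 1) (k - 1), jn H σ k i := by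
      apply Finset.sum_le_sum
      intro i hi
      simp only [Finset.mem_Icc] at hi
      have hj : 0 ≤ jn H σ k i := jn_nonneg H σ hH hσ k i (by omega) (by omega)
      calc jn H σ k i * y i ≤ jn H σ k i * 1 :=
            mul_le_mul_of_nonneg_left (hyle i) hj
        _ = jn H σ k i := mul_one _
    have hg : gn H σ k * y k ≤ gn H σ k := by
      have hgnn : 0 ≤ gn H σ k := gn_nonneg H σ hH hσ k (by omega)
      calc gn H σ k * y k ≤ gn H σ k * 1 := mul_le_mul_of_nonneg_left (hyle k) hgnn
        _ = gn H σ k := mul_one _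
    have hnum : (∑ i ∈ Finset.Icc 1 (k - 1), jn H σ k i * y i) + gn H σ k * y k
        ≤ Bfun H σ n N (k - n) := by
      rw [hBs, hIcc, Finset.sum_union hdisj2, hsum1]
      linarith
    unfold Ffac
    gcongr
  -- assemble
  have hFnonneg : ∀ k ∈ Finset.Icc (n + 1) (n + m), 0 ≤ Ffac H σ N y k := by
    intro k hk
    simp only [Finset.mem_Icc] at hk
    exact (hFpos k (by omega) hk.2).le
  have hP1 : (0:ℝ) ≤ ∏ k ∈ Finset.Icc 1 n, Ffac H σ N y k := by
    apply Finset.prod_nonneg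
    intro k hk
    simp only [Finset.mem_Icc] at hk
    exact (hFpos k hk.1 (by omega)).le
  calc Sp H σ N s₀ (n + m) y
      = s₀ * ((∏ k ∈ Finset.Icc 1 n, Ffac H σ N y k)
          * ∏ k ∈ Finset.Icc (n + 1) (n + m), Ffac H σ N y k) := by
        rw [Sp_eq, h1, Finset.prod_union hdisj]
    _ ≤ s₀ * ((∏ k ∈ Finset.Icc 1 n, Ffac H σ N y k)
          * ∏ k ∈ Finset.Icc (n + 1) (n + m),
              (1 + Bfun H σ n N (k - n) / (N : ℝ) ^ H)) := by
        apply mul_le_mul_of_nonneg_left _ hs₀.le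
        exact mul_le_mul_of_nonneg_left (Finset.prod_le_prod hFnonneg hpoint) hP1
    _ = Sp H σ N s₀ n (fun _ => -1)
          * ∏ k ∈ Finset.Icc 1 m, (1 + Bfun H σ n N k / (N : ℝ) ^ H) := by
        rw [Sp_eq, hreidx, hfirst]
        ring
end

section
/- Let c_X := σ·c_H/(3/2 − H) + σ·c_H/(H + 1/2). Then for every integer n ≥ 2 and every sign vector (x_1,…,x_n) ∈ {−1,1}^n one has |∑_{i=1}^{n−1} j_n(i)·x_i + g_n·x_n| ≤ c_X · n^{H−1/2}. -/
open MeasureTheory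

open intervalIntegral


noncomputable def Gf (H c : ℝ) : ℝ → ℝ :=
  fun x => x ^ ((1:ℝ)/2 - H) * ((c + 1 - x) ^ (H - 1/2) - (c - x) ^ (H - 1/2))

lemma bern_aux {p b : ℝ} (hb : 0 < b) (hp0 : 0 ≤ p) (hp1 : p ≤ 1) :
    (b + 1) ^ p ≤ b ^ p + p * b ^ (p - 1) := by
  have hb1 : (0:ℝ) ≤ 1 + 1 / b := by positivity
  have h1 : (b + 1 : ℝ) = b * (1 + 1 / b) := by field_simp
  have h3 : (1 + 1 / b) ^ p ≤ 1 + p * (1 / b) :=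
    rpow_one_add_le_one_add_mul_self (neg_one_lt_zero.le.trans (by positivity)) hp0 hp1
  calc (b + 1) ^ p = b ^ p * (1 + 1 / b) ^ p := by
        rw [h1, Real.mul_rpow hb.le hb1]
    _ ≤ b ^ p * (1 + p * (1 / b)) :=
        mul_le_mul_of_nonneg_left h3 (Real.rpow_nonneg hb.le p)
    _ = b ^ p + p * (b ^ p / b) := by ring
    _ = b ^ p + p * b ^ (p - 1) := by rw [Real.rpow_sub_one hb.ne']

lemma contOn_sub_rpow (c q : ℝ) (hq : 0 ≤ q) (s : Set ℝ) :
    ContinuousOn (fun x : ℝ => (c - x) ^ q) s :=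
  ContinuousOn.rpow_const (continuousOn_const.sub continuousOn_id) (fun _ _ => Or.inr hq)

lemma intInt_Gf (H c a b : ℝ) (hH : H ∈ Set.Ioo (1/2 : ℝ) 1) :
    IntervalIntegrable (Gf H c) volume a b := by
  have hp : (0:ℝ) ≤ H - 1/2 := by linarith [hH.1]
  exact (intervalIntegrable_rpow' (by linarith [hH.2] : (-1:ℝ) < 1/2 - H)).mul_continuousOn
    ((contOn_sub_rpow (c+1) _ hp _).sub (contOn_sub_rpow c _ hp _))

lemma eval_sub (H a b c : ℝ) (hH : H ∈ Set.Ioo (1/2 : ℝ) 1) :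
    ∫ x in a..b, (c - x) ^ (H - 1/2)
      = ((c - a) ^ (H + 1/2) - (c - b) ^ (H + 1/2)) / (H + 1/2) := by
  rw [intervalIntegral.integral_comp_sub_left (fun u => u ^ (H - 1/2)) c,
    integral_rpow (Or.inl (by linarith [hH.1] : (-1:ℝ) < H - 1/2))]
  rw [show H - 1/2 + 1 = H + 1/2 by ring]

/-- key bound `E ≤ 1/(3/2 - H)` with `c = n - 1 ≥ 1`. -/
lemma E_bound {H c : ℝ} (hH : H ∈ Set.Ioo (1/2 : ℝ) 1) (hc : 1 ≤ c) :
    ∫ x in (0:ℝ)..c, Gf H c x ≤ 1 / (3/2 - H) := by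
  have h1 := hH.1
  have h2 := hH.2
  have hm0 : (0:ℝ) < c / 2 := by linarith
  have hmh : (1:ℝ)/2 ≤ c / 2 := by linarith
  have hmc : c / 2 ≤ c := by linarith
  rw [← integral_add_adjacent_intervals (intInt_Gf H c 0 (c/2) hH) (intInt_Gf H c (c/2) c hH)]
  have partA : ∫ x in (0:ℝ)..(c/2), Gf H c x
      ≤ ∫ x in (0:ℝ)..(c/2), x ^ ((1:ℝ)/2 - H) * ((H - 1/2) * (c/2) ^ (H - 1/2 - 1)) := by
    apply integral_mono_on hm0.le (intInt_Gf H c 0 (c/2) hH)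
      ((intervalIntegrable_rpow' (by linarith : (-1:ℝ) < 1/2 - H)).mul_const _)
    intro x hx
    obtain ⟨hx0, hxm⟩ := hx
    apply mul_le_mul_of_nonneg_left _ (Real.rpow_nonneg hx0 _)
    have hb : 0 < c - x := by linarith
    have h5 := bern_aux (p := H - 1/2) hb (by linarith) (by linarith)
    rw [show c - x + 1 = c + 1 - x by ring] at h5
    have h6 : (c - x) ^ (H - 1/2 - 1) ≤ (c/2) ^ (H - 1/2 - 1) :=
      Real.rpow_le_rpow_of_nonpos hm0 (by linarith) (by linarith)
    nlinarith [Real.rpow_nonneg hb.le (H - 1/2)]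
  have valA : ∫ x in (0:ℝ)..(c/2), x ^ ((1:ℝ)/2 - H) * ((H - 1/2) * (c/2) ^ (H - 1/2 - 1))
      = (H - 1/2) / (3/2 - H) := by
    rw [intervalIntegral.integral_mul_const,
      integral_rpow (Or.inl (by linarith : (-1:ℝ) < 1/2 - H)),
      show (1:ℝ)/2 - H + 1 = 3/2 - H by ring,
      Real.zero_rpow (by linarith : (3:ℝ)/2 - H ≠ 0)]
    have hmm : (c/2) ^ ((3:ℝ)/2 - H) * (c/2) ^ (H - 1/2 - 1) = 1 := by
      rw [← Real.rpow_add hm0, show (3:ℝ)/2 - H + (H - 1/2 - 1) = 0 by ring, Real.rpow_zero]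
    calc ((c/2) ^ ((3:ℝ)/2 - H) - 0) / (3/2 - H) * ((H - 1/2) * (c/2) ^ (H - 1/2 - 1))
        = (H - 1/2) * ((c/2) ^ ((3:ℝ)/2 - H) * (c/2) ^ (H - 1/2 - 1)) / (3/2 - H) := by ring
      _ = (H - 1/2) / (3/2 - H) := by rw [hmm, mul_one]
  have partB : ∫ x in (c/2)..c, Gf H c x ≤ 1 := by
    have hint1 : IntervalIntegrable (fun x : ℝ => (c + 1 - x) ^ (H - 1/2)) volume (c/2) c :=
      (contOn_sub_rpow (c+1) _ (by linarith) _).intervalIntegrable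
    have hint2 : IntervalIntegrable (fun x : ℝ => (c - x) ^ (H - 1/2)) volume (c/2) c :=
      (contOn_sub_rpow c _ (by linarith) _).intervalIntegrable
    have step1 : ∫ x in (c/2)..c, Gf H c x
        ≤ ∫ x in (c/2)..c,
            (c/2) ^ ((1:ℝ)/2 - H) * ((c + 1 - x) ^ (H - 1/2) - (c - x) ^ (H - 1/2)) := by
      apply integral_mono_on hmc (intInt_Gf H c (c/2) c hH) ((hint1.sub hint2).const_mul _)
      intro x hx
      obtain ⟨hxm, hxc⟩ := hx
      have hbr : 0 ≤ (c + 1 - x) ^ (H - 1/2) - (c - x) ^ (H - 1/2) := by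
        have := Real.rpow_le_rpow (by linarith : (0:ℝ) ≤ c - x)
          (by linarith : c - x ≤ c + 1 - x) (by linarith : (0:ℝ) ≤ H - 1/2)
        linarith
      exact mul_le_mul_of_nonneg_right
        (Real.rpow_le_rpow_of_nonpos hm0 hxm (by linarith)) hbr
    have key : (c/2 + 1) ^ (H + 1/2) - 1 - (c/2) ^ (H + 1/2) ≤ (H + 1/2) * (c/2) ^ (H - 1/2) := by
      have e1 : (c/2 + 1) ^ (H + 1/2) = (c/2 + 1) ^ (H - 1/2) * (c/2 + 1) := by
        rw [show H + 1/2 = (H - 1/2) + 1 by ring,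
          Real.rpow_add_one (by linarith : c/2 + 1 ≠ 0)]
      have e2 : (c/2 + 1) ^ (H - 1/2) ≤ (c/2) ^ (H - 1/2) + (H - 1/2) * (c/2) ^ (H - 1/2 - 1) :=
        bern_aux hm0 (by linarith) (by linarith)
      have e3 : (H - 1/2) * (c/2) ^ (H - 1/2 - 1) ≤ 1 := by
        have h6 : (c/2) ^ (H - 1/2 - 1) ≤ ((1:ℝ)/2) ^ (H - 1/2 - 1) :=
          Real.rpow_le_rpow_of_nonpos (by norm_num) hmh (by linarith)
        have h7 : ((1:ℝ)/2) ^ (H - 1/2 - 1) ≤ 2 := by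
          calc ((1:ℝ)/2) ^ (H - 1/2 - 1) = ((2:ℝ) ^ (-1:ℝ)) ^ (H - 1/2 - 1) := by
                rw [Real.rpow_neg_one]; norm_num
            _ = (2:ℝ) ^ ((-1:ℝ) * (H - 1/2 - 1)) := (Real.rpow_mul (by norm_num) _ _).symm
            _ ≤ 2 ^ (1:ℝ) := Real.rpow_le_rpow_of_exponent_le (by norm_num) (by linarith)
            _ = 2 := Real.rpow_one 2
        have h8 : (0:ℝ) ≤ (c/2) ^ (H - 1/2 - 1) := Real.rpow_nonneg hm0.le _
        nlinarith
      have e4 : (c/2) ^ (H - 1/2) * (c/2) = (c/2) ^ (H + 1/2) := by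
        rw [show H + 1/2 = (H - 1/2) + 1 by ring, Real.rpow_add_one hm0.ne']
      have e5 : (c/2) ^ (H - 1/2 - 1) * (c/2) = (c/2) ^ (H - 1/2) := by
        rw [Real.rpow_sub_one hm0.ne', div_mul_cancel₀]
        exact hm0.ne'
      nlinarith [Real.rpow_nonneg hm0.le (H - 1/2), hm0]
    have eval1 : ∫ x in (c/2)..c, (c + 1 - x) ^ (H - 1/2)
        = ((c/2 + 1) ^ (H + 1/2) - 1) / (H + 1/2) := by
      rw [eval_sub H (c/2) c (c+1) hH, show c + 1 - c/2 = c/2 + 1 by ring,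
        show c + 1 - c = 1 by ring, Real.one_rpow]
    have eval2 : ∫ x in (c/2)..c, (c - x) ^ (H - 1/2) = (c/2) ^ (H + 1/2) / (H + 1/2) := by
      rw [eval_sub H (c/2) c c hH, show c - c/2 = c/2 by ring, sub_self,
        Real.zero_rpow (by linarith : H + 1/2 ≠ 0), sub_zero]
    have hq0 : (0:ℝ) < H + 1/2 := by linarith
    have final : (c/2) ^ ((1:ℝ)/2 - H) * (c/2) ^ (H - 1/2) = 1 := by
      rw [← Real.rpow_add hm0, show (1:ℝ)/2 - H + (H - 1/2) = 0 by ring, Real.rpow_zero]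
    calc ∫ x in (c/2)..c, Gf H c x
        ≤ (c/2) ^ ((1:ℝ)/2 - H) * (((c/2 + 1) ^ (H + 1/2) - 1 - (c/2) ^ (H + 1/2)) / (H + 1/2)) := by
          rw [intervalIntegral.integral_const_mul, intervalIntegral.integral_sub hint1 hint2,
            eval1, eval2] at step1
          calc ∫ x in (c/2)..c, Gf H c x ≤ _ := step1
            _ = (c/2) ^ ((1:ℝ)/2 - H)
                * (((c/2 + 1) ^ (H + 1/2) - 1 - (c/2) ^ (H + 1/2)) / (H + 1/2)) := by ring
      _ ≤ (c/2) ^ ((1:ℝ)/2 - H) * ((c/2) ^ (H - 1/2)) := by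
          apply mul_le_mul_of_nonneg_left _ (Real.rpow_nonneg hm0.le _)
          rw [div_le_iff₀ hq0]
          linarith [key]
      _ = 1 := final
  have h32 : (0:ℝ) < 3/2 - H := by linarith
  have : (H - 1/2) / (3/2 - H) + 1 = 1 / (3/2 - H) := by
    rw [div_add' _ _ _ h32.ne']; congr 1; ring
  linarith [partA, valA, partB]

lemma Gf_nonneg {H c : ℝ} (hH : H ∈ Set.Ioo (1/2 : ℝ) 1) {x : ℝ} (hx0 : 0 ≤ x)
    (hxc : x ≤ c) : 0 ≤ Gf H c x := by
  apply mul_nonneg (Real.rpow_nonneg hx0 _)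
  have := Real.rpow_le_rpow (by linarith : (0:ℝ) ≤ c - x) (by linarith : c - x ≤ c + 1 - x)
    (by linarith [hH.1] : (0:ℝ) ≤ H - 1/2)
  linarith


lemma eval_add (H c : ℝ) (hH : H ∈ Set.Ioo (1/2 : ℝ) 1) :
    ∫ v in (0:ℝ)..1, (v + c) ^ (H - 3/2)
      = ((c + 1) ^ (H - 1/2) - c ^ (H - 1/2)) / (H - 1/2) := by
  rw [intervalIntegral.integral_comp_add_right (fun u => u ^ (H - 3/2)) c,
    integral_rpow (Or.inl (by linarith [hH.1] : (-1:ℝ) < H - 3/2))]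
  rw [show H - 3/2 + 1 = H - 1/2 by ring, zero_add, add_comm 1 c]

lemma jn_abs_le {H σ : ℝ} (hH : H ∈ Set.Ioo (1/2 : ℝ) 1) (hσ : 0 < σ) {n i : ℕ}
    (hn : 2 ≤ n) (hi1 : 1 ≤ i) (hi2 : i ≤ n - 1) :
    |jn H σ n i| ≤ σ * cH H * (n:ℝ) ^ (H - 1/2)
      * ∫ x in ((i:ℝ) - 1)..(i:ℝ), Gf H ((n:ℝ) - 1) x := by
  have h1 := hH.1
  have h2 := hH.2
  have hcH : 0 ≤ cH H := Real.sqrt_nonneg _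
  have hp0 : (0:ℝ) < H - 1/2 := by linarith
  have he3 : (-1:ℝ) < H - 3/2 := by linarith
  have hin : (i:ℝ) ≤ (n:ℝ) - 1 := by
    have h : (i:ℝ) + 1 ≤ (n:ℝ) := by exact_mod_cast Nat.add_le_of_le_sub (by omega) hi2
    linarith
  have hi1' : (1:ℝ) ≤ (i:ℝ) := by exact_mod_cast hi1
  have hGnn : ∀ x ∈ Set.Icc ((i:ℝ) - 1) (i:ℝ), 0 ≤ Gf H ((n:ℝ) - 1) x := fun x hx =>
    Gf_nonneg hH (by linarith [hx.1]) (by linarith [hx.2])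
  have hIG : (0:ℝ) ≤ ∫ x in ((i:ℝ) - 1)..(i:ℝ), Gf H ((n:ℝ) - 1) x :=
    intervalIntegral.integral_nonneg (by linarith) hGnn
  -- the bound function
  set g : ℝ → ℝ := fun x => ((n:ℝ) ^ (H - 1/2) / (H - 1/2)) * Gf H ((n:ℝ) - 1) x with hg
  have hbound : IntervalIntegrable g volume ((i:ℝ) - 1) (i:ℝ) :=
    (intInt_Gf H ((n:ℝ) - 1) _ _ hH).const_mul _
  have key : ‖∫ x in ((i:ℝ) - 1)..(i:ℝ),
      x ^ ((1:ℝ)/2 - H) *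
        ∫ v in (0:ℝ)..1, (v + n - 1) ^ (H - 1/2) * (v + n - 1 - x) ^ (H - 3/2)‖
      ≤ |∫ x in ((i:ℝ) - 1)..(i:ℝ), g x| := by
    apply intervalIntegral.norm_integral_le_abs_of_norm_le _ hbound
    rw [Set.uIoc_of_le (by linarith : (i:ℝ) - 1 ≤ (i:ℝ))]
    filter_upwards [ae_restrict_mem measurableSet_Ioc] with t ht
    obtain ⟨ht1, ht2⟩ := ht
    have ht0 : 0 < t := by linarith
    have htn : t ≤ (n:ℝ) - 1 := by linarith
    rw [Real.norm_eq_abs, abs_mul, abs_of_nonneg (Real.rpow_nonneg ht0.le _)]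
    have inner_le : |∫ v in (0:ℝ)..1, (v + n - 1) ^ (H - 1/2) * (v + n - 1 - t) ^ (H - 3/2)|
        ≤ (n:ℝ) ^ (H - 1/2) / (H - 1/2)
          * (((n:ℝ) - t) ^ (H - 1/2) - ((n:ℝ) - 1 - t) ^ (H - 1/2)) := by
      have hbnd2 : IntervalIntegrable
          (fun v => (n:ℝ) ^ (H - 1/2) * (v + ((n:ℝ) - 1 - t)) ^ (H - 3/2)) volume 0 1 := by
        have := ((intervalIntegrable_rpow' he3
          (a := (n:ℝ) - 1 - t) (b := 1 + ((n:ℝ) - 1 - t))).comp_add_right ((n:ℝ) - 1 - t))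
        simpa using this.const_mul ((n:ℝ) ^ (H - 1/2))
      have step : ‖∫ v in (0:ℝ)..1, (v + n - 1) ^ (H - 1/2) * (v + n - 1 - t) ^ (H - 3/2)‖
          ≤ |∫ v in (0:ℝ)..1, (n:ℝ) ^ (H - 1/2) * (v + ((n:ℝ) - 1 - t)) ^ (H - 3/2)| := by
        apply intervalIntegral.norm_integral_le_abs_of_norm_le _ hbnd2
        rw [Set.uIoc_of_le (by norm_num : (0:ℝ) ≤ 1)]
        filter_upwards [ae_restrict_mem measurableSet_Ioc] with v hv
        obtain ⟨hv1, hv2⟩ := hv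
        have hvn : (0:ℝ) ≤ v + (n:ℝ) - 1 := by
          have : (2:ℝ) ≤ (n:ℝ) := by exact_mod_cast hn
          linarith
        have hvnt : (0:ℝ) ≤ v + (n:ℝ) - 1 - t := by linarith
        rw [Real.norm_eq_abs, abs_mul, abs_of_nonneg (Real.rpow_nonneg hvn _),
          abs_of_nonneg (Real.rpow_nonneg hvnt _),
          show v + (n:ℝ) - 1 - t = v + ((n:ℝ) - 1 - t) by ring]
        exact mul_le_mul_of_nonneg_right
          (Real.rpow_le_rpow hvn (by linarith) hp0.le)
          (Real.rpow_nonneg (by linarith) _)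
      have heval : ∫ v in (0:ℝ)..1, (n:ℝ) ^ (H - 1/2) * (v + ((n:ℝ) - 1 - t)) ^ (H - 3/2)
          = (n:ℝ) ^ (H - 1/2)
            * ((((n:ℝ) - 1 - t) + 1) ^ (H - 1/2) - ((n:ℝ) - 1 - t) ^ (H - 1/2)) / (H - 1/2) := by
        rw [intervalIntegral.integral_const_mul, eval_add H ((n:ℝ) - 1 - t) hH, mul_div_assoc]
      have hnn : (0:ℝ) ≤ (n:ℝ) ^ (H - 1/2)
          * ((((n:ℝ) - 1 - t) + 1) ^ (H - 1/2) - ((n:ℝ) - 1 - t) ^ (H - 1/2)) / (H - 1/2) := by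
        apply div_nonneg _ hp0.le
        apply mul_nonneg (Real.rpow_nonneg (by positivity) _)
        have := Real.rpow_le_rpow (by linarith : (0:ℝ) ≤ (n:ℝ) - 1 - t)
          (by linarith : (n:ℝ) - 1 - t ≤ ((n:ℝ) - 1 - t) + 1) hp0.le
        linarith
      rw [Real.norm_eq_abs] at step
      calc |∫ v in (0:ℝ)..1, (v + n - 1) ^ (H - 1/2) * (v + n - 1 - t) ^ (H - 3/2)|
          ≤ |∫ v in (0:ℝ)..1, (n:ℝ) ^ (H - 1/2) * (v + ((n:ℝ) - 1 - t)) ^ (H - 3/2)| := step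
        _ = (n:ℝ) ^ (H - 1/2)
            * ((((n:ℝ) - 1 - t) + 1) ^ (H - 1/2) - ((n:ℝ) - 1 - t) ^ (H - 1/2)) / (H - 1/2) := by
            rw [heval, abs_of_nonneg hnn]
        _ = (n:ℝ) ^ (H - 1/2) / (H - 1/2)
            * (((n:ℝ) - t) ^ (H - 1/2) - ((n:ℝ) - 1 - t) ^ (H - 1/2)) := by
            rw [show ((n:ℝ) - 1 - t) + 1 = (n:ℝ) - t by ring]; ring
    calc t ^ ((1:ℝ)/2 - H)
        * |∫ v in (0:ℝ)..1, (v + n - 1) ^ (H - 1/2) * (v + n - 1 - t) ^ (H - 3/2)|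
        ≤ t ^ ((1:ℝ)/2 - H) * ((n:ℝ) ^ (H - 1/2) / (H - 1/2)
            * (((n:ℝ) - t) ^ (H - 1/2) - ((n:ℝ) - 1 - t) ^ (H - 1/2))) :=
          mul_le_mul_of_nonneg_left inner_le (Real.rpow_nonneg ht0.le _)
      _ = g t := by
          rw [hg]; simp only [Gf]
          rw [show (n:ℝ) - 1 + 1 - t = (n:ℝ) - t by ring]; ring
  have habs : |jn H σ n i| = σ * cH H * (H - 1/2)
      * |∫ x in ((i:ℝ) - 1)..(i:ℝ),
          x ^ ((1:ℝ)/2 - H) *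
            ∫ v in (0:ℝ)..1, (v + n - 1) ^ (H - 1/2) * (v + n - 1 - x) ^ (H - 3/2)| := by
    rw [jn, abs_mul, abs_of_nonneg (by positivity : (0:ℝ) ≤ σ * cH H * (H - 1/2))]
  have hgint : |∫ x in ((i:ℝ) - 1)..(i:ℝ), g x|
      = (n:ℝ) ^ (H - 1/2) / (H - 1/2) * ∫ x in ((i:ℝ) - 1)..(i:ℝ), Gf H ((n:ℝ) - 1) x := by
    rw [hg, intervalIntegral.integral_const_mul]
    exact abs_of_nonneg (mul_nonneg (by positivity) hIG)
  rw [habs]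
  rw [Real.norm_eq_abs] at key
  calc σ * cH H * (H - 1/2) * |_| ≤ σ * cH H * (H - 1/2) * |∫ x in ((i:ℝ) - 1)..(i:ℝ), g x| :=
        mul_le_mul_of_nonneg_left key (by positivity)
    _ = σ * cH H * (n:ℝ) ^ (H - 1/2) * ∫ x in ((i:ℝ) - 1)..(i:ℝ), Gf H ((n:ℝ) - 1) x := by
        rw [hgint]
        have hc2 : (H - 1/2) * ((n:ℝ) ^ (H - 1/2) / (H - 1/2)) = (n:ℝ) ^ (H - 1/2) :=
          mul_div_cancel₀ _ hp0.ne'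
        calc σ * cH H * (H - 1/2)
            * ((n:ℝ) ^ (H - 1/2) / (H - 1/2) * ∫ x in ((i:ℝ) - 1)..(i:ℝ), Gf H ((n:ℝ) - 1) x)
            = σ * cH H * ((H - 1/2) * ((n:ℝ) ^ (H - 1/2) / (H - 1/2)))
              * ∫ x in ((i:ℝ) - 1)..(i:ℝ), Gf H ((n:ℝ) - 1) x := by ring
          _ = σ * cH H * (n:ℝ) ^ (H - 1/2)
              * ∫ x in ((i:ℝ) - 1)..(i:ℝ), Gf H ((n:ℝ) - 1) x := by rw [hc2]

lemma gn_abs_le {H σ : ℝ} (hH : H ∈ Set.Ioo (1/2 : ℝ) 1) (hσ : 0 < σ) {n : ℕ} (hn : 2 ≤ n) :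
    |gn H σ n| ≤ σ * cH H / (H + 1/2) * (n:ℝ) ^ (H - 1/2) := by
  have h1 := hH.1
  have h2 := hH.2
  have hcH : 0 ≤ cH H := Real.sqrt_nonneg _
  have hp0 : (0:ℝ) < H - 1/2 := by linarith
  have hq0 : (0:ℝ) < H + 1/2 := by linarith
  have he3 : (-1:ℝ) < H - 3/2 := by linarith
  have hn2 : (2:ℝ) ≤ (n:ℝ) := by exact_mod_cast hn
  have hcont : ContinuousOn (fun x : ℝ => x ^ ((1:ℝ)/2 - H) * ((n:ℝ) - x) ^ (H - 1/2))
      (Set.uIcc ((n:ℝ) - 1) (n:ℝ)) := by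
    rw [Set.uIcc_of_le (by linarith)]
    exact ContinuousOn.mul
      (ContinuousOn.rpow_const continuousOn_id
        (fun x hx => Or.inl (by have := hx.1; intro h; rw [h] at this; linarith)))
      (contOn_sub_rpow _ _ hp0.le _)
  have hint0 : IntervalIntegrable (fun x : ℝ => x ^ ((1:ℝ)/2 - H) * ((n:ℝ) - x) ^ (H - 1/2))
      volume ((n:ℝ) - 1) (n:ℝ) := hcont.intervalIntegrable
  set g2 : ℝ → ℝ :=
    fun x => x ^ ((1:ℝ)/2 - H) * ((n:ℝ) - x) ^ (H - 1/2) * ((n:ℝ) ^ (H - 1/2) / (H - 1/2))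
    with hg2
  have hbound2 : IntervalIntegrable g2 volume ((n:ℝ) - 1) (n:ℝ) := hint0.mul_const _
  have key : ‖∫ x in ((n:ℝ) - 1)..(n:ℝ),
      x ^ ((1:ℝ)/2 - H) * ((n:ℝ) - x) ^ (H - 1/2) *
        ∫ y in (0:ℝ)..1, (y * ((n:ℝ) - x) + x) ^ (H - 1/2) * y ^ (H - 3/2)‖
      ≤ |∫ x in ((n:ℝ) - 1)..(n:ℝ), g2 x| := by
    apply intervalIntegral.norm_integral_le_abs_of_norm_le _ hbound2
    rw [Set.uIoc_of_le (by linarith : (n:ℝ) - 1 ≤ (n:ℝ))]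
    filter_upwards [ae_restrict_mem measurableSet_Ioc] with t ht
    obtain ⟨ht1, ht2⟩ := ht
    have ht0 : 0 < t := by linarith
    have hnt : (0:ℝ) ≤ (n:ℝ) - t := by linarith
    have inner_le : |∫ y in (0:ℝ)..1, (y * ((n:ℝ) - t) + t) ^ (H - 1/2) * y ^ (H - 3/2)|
        ≤ (n:ℝ) ^ (H - 1/2) / (H - 1/2) := by
      have hbnd : IntervalIntegrable (fun y : ℝ => (n:ℝ) ^ (H - 1/2) * y ^ (H - 3/2))
          volume 0 1 := (intervalIntegrable_rpow' he3).const_mul _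
      have step : ‖∫ y in (0:ℝ)..1, (y * ((n:ℝ) - t) + t) ^ (H - 1/2) * y ^ (H - 3/2)‖
          ≤ |∫ y in (0:ℝ)..1, (n:ℝ) ^ (H - 1/2) * y ^ (H - 3/2)| := by
        apply intervalIntegral.norm_integral_le_abs_of_norm_le _ hbnd
        rw [Set.uIoc_of_le (by norm_num : (0:ℝ) ≤ 1)]
        filter_upwards [ae_restrict_mem measurableSet_Ioc] with y hy
        obtain ⟨hy1, hy2⟩ := hy
        have hbase : (0:ℝ) ≤ y * ((n:ℝ) - t) + t := by
          have := mul_nonneg hy1.le hnt; linarith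
        have hbasen : y * ((n:ℝ) - t) + t ≤ (n:ℝ) := by
          have := mul_le_of_le_one_left hnt hy2; linarith
        rw [Real.norm_eq_abs, abs_mul, abs_of_nonneg (Real.rpow_nonneg hbase _),
          abs_of_nonneg (Real.rpow_nonneg hy1.le _)]
        exact mul_le_mul_of_nonneg_right (Real.rpow_le_rpow hbase hbasen hp0.le)
          (Real.rpow_nonneg hy1.le _)
      have heval : ∫ y in (0:ℝ)..1, (n:ℝ) ^ (H - 1/2) * y ^ (H - 3/2)
          = (n:ℝ) ^ (H - 1/2) / (H - 1/2) := by
        rw [intervalIntegral.integral_const_mul,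
          integral_rpow (Or.inl he3), show H - 3/2 + 1 = H - 1/2 by ring,
          Real.one_rpow, Real.zero_rpow hp0.ne', sub_zero, mul_one_div]
      rw [Real.norm_eq_abs] at step
      rw [heval] at step
      exact step.trans (le_of_eq (abs_of_nonneg
        (div_nonneg (Real.rpow_nonneg (Nat.cast_nonneg n) _) hp0.le)))
    rw [Real.norm_eq_abs, abs_mul, abs_mul,
      abs_of_nonneg (Real.rpow_nonneg ht0.le ((1:ℝ)/2 - H)),
      abs_of_nonneg (Real.rpow_nonneg hnt (H - 1/2))]
    calc t ^ ((1:ℝ)/2 - H) * ((n:ℝ) - t) ^ (H - 1/2)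
          * |∫ y in (0:ℝ)..1, (y * ((n:ℝ) - t) + t) ^ (H - 1/2) * y ^ (H - 3/2)|
        ≤ t ^ ((1:ℝ)/2 - H) * ((n:ℝ) - t) ^ (H - 1/2) * ((n:ℝ) ^ (H - 1/2) / (H - 1/2)) :=
          mul_le_mul_of_nonneg_left inner_le
            (mul_nonneg (Real.rpow_nonneg ht0.le _) (Real.rpow_nonneg hnt _))
      _ = g2 t := rfl
  have hI0 : (0:ℝ) ≤ ∫ x in ((n:ℝ) - 1)..(n:ℝ), x ^ ((1:ℝ)/2 - H) * ((n:ℝ) - x) ^ (H - 1/2) :=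
    intervalIntegral.integral_nonneg (by linarith) (fun x hx =>
      mul_nonneg (Real.rpow_nonneg (by linarith [hx.1]) _)
        (Real.rpow_nonneg (by linarith [hx.2]) _))
  have hILe : ∫ x in ((n:ℝ) - 1)..(n:ℝ), x ^ ((1:ℝ)/2 - H) * ((n:ℝ) - x) ^ (H - 1/2)
      ≤ 1 / (H + 1/2) := by
    have step : ∫ x in ((n:ℝ) - 1)..(n:ℝ), x ^ ((1:ℝ)/2 - H) * ((n:ℝ) - x) ^ (H - 1/2)
        ≤ ∫ x in ((n:ℝ) - 1)..(n:ℝ), ((n:ℝ) - x) ^ (H - 1/2) := by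
      apply integral_mono_on (by linarith) hint0
        ((contOn_sub_rpow (n:ℝ) _ hp0.le _).intervalIntegrable)
      intro x hx
      exact mul_le_of_le_one_left (Real.rpow_nonneg (by linarith [hx.2]) _)
        (Real.rpow_le_one_of_one_le_of_nonpos (by linarith [hx.1]) (by linarith))
    have heval : ∫ x in ((n:ℝ) - 1)..(n:ℝ), ((n:ℝ) - x) ^ (H - 1/2) = 1 / (H + 1/2) := by
      rw [eval_sub H ((n:ℝ) - 1) (n:ℝ) (n:ℝ) hH, show (n:ℝ) - ((n:ℝ) - 1) = 1 by ring,
        sub_self, Real.one_rpow, Real.zero_rpow hq0.ne', sub_zero]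
    linarith
  have habs : |gn H σ n| = σ * cH H * (H - 1/2)
      * |∫ x in ((n:ℝ) - 1)..(n:ℝ),
          x ^ ((1:ℝ)/2 - H) * ((n:ℝ) - x) ^ (H - 1/2) *
            ∫ y in (0:ℝ)..1, (y * ((n:ℝ) - x) + x) ^ (H - 1/2) * y ^ (H - 3/2)| := by
    rw [gn, abs_mul, abs_of_nonneg (by positivity : (0:ℝ) ≤ σ * cH H * (H - 1/2))]
  have hgval : |∫ x in ((n:ℝ) - 1)..(n:ℝ), g2 x|
      ≤ 1 / (H + 1/2) * ((n:ℝ) ^ (H - 1/2) / (H - 1/2)) := by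
    rw [hg2, intervalIntegral.integral_mul_const,
      abs_of_nonneg (mul_nonneg hI0 (by positivity))]
    exact mul_le_mul_of_nonneg_right hILe (by positivity)
  rw [Real.norm_eq_abs] at key
  rw [habs]
  have hc2 : (H - 1/2) * ((n:ℝ) ^ (H - 1/2) / (H - 1/2)) = (n:ℝ) ^ (H - 1/2) :=
    mul_div_cancel₀ _ hp0.ne'
  calc σ * cH H * (H - 1/2) * |_|
      ≤ σ * cH H * (H - 1/2) * (1 / (H + 1/2) * ((n:ℝ) ^ (H - 1/2) / (H - 1/2))) :=
        mul_le_mul_of_nonneg_left (key.trans hgval) (by positivity)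
    _ = σ * cH H / (H + 1/2) * ((H - 1/2) * ((n:ℝ) ^ (H - 1/2) / (H - 1/2))) := by ring
    _ = σ * cH H / (H + 1/2) * (n:ℝ) ^ (H - 1/2) := by rw [hc2]

lemma sum_int_Gf {H : ℝ} (hH : H ∈ Set.Ioo (1/2 : ℝ) 1) {n : ℕ} (hn : 2 ≤ n) :
    ∑ i ∈ Finset.Icc 1 (n - 1), ∫ x in ((i:ℝ) - 1)..(i:ℝ), Gf H ((n:ℝ) - 1) x
      = ∫ x in (0:ℝ)..((n:ℝ) - 1), Gf H ((n:ℝ) - 1) x := by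
  have h := intervalIntegral.sum_integral_adjacent_intervals
    (a := fun k : ℕ => (k:ℝ)) (n := n - 1) (f := Gf H ((n:ℝ) - 1)) (μ := volume)
    (fun k _ => intInt_Gf H ((n:ℝ) - 1) _ _ hH)
  have hc : ((n - 1 : ℕ) : ℝ) = (n:ℝ) - 1 := by
    have : 1 ≤ n := by omega
    push_cast [this]; ring
  rw [Nat.cast_zero, hc] at h
  rw [← h, show Finset.Icc 1 (n - 1) = Finset.Ico 1 n by
      rw [← Finset.Ico_add_one_right_eq_Icc]; congr 1; omega,
    Finset.sum_Ico_eq_sum_range]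
  apply Finset.sum_congr rfl
  intro k _
  congr 1 <;> push_cast <;> ring


/-- Lemma 5.2 (`ubx`): with `c_X = σ c_H/(3/2 - H) + σ c_H/(H + 1/2)`, for every `n ≥ 2`
and every sign vector `x ∈ {-1,1}^n`,
`|∑_{i=1}^{n-1} j_n(i) x_i + g_n x_n| ≤ c_X n^{H-1/2}`. -/
theorem abs_Xn_bound (H σ : ℝ) (hH : H ∈ Set.Ioo (1/2 : ℝ) 1) (hσ : 0 < σ)
    (n : ℕ) (hn : 2 ≤ n) (x : ℕ → ℝ) (hx : ∀ i, x i = -1 ∨ x i = 1) :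
    |(∑ i ∈ Finset.Icc 1 (n - 1), jn H σ n i * x i) + gn H σ n * x n|
      ≤ (σ * cH H / (3/2 - H) + σ * cH H / (H + 1/2)) * (n : ℝ) ^ (H - 1/2) := by
  have h1 := hH.1
  have h2 := hH.2
  have hcH : 0 ≤ cH H := Real.sqrt_nonneg _
  have hn2 : (2:ℝ) ≤ (n:ℝ) := by exact_mod_cast hn
  have hxabs : ∀ i, |x i| = 1 := fun i => by rcases hx i with h | h <;> simp [h]
  have hnp : (0:ℝ) ≤ (n:ℝ) ^ (H - 1/2) := Real.rpow_nonneg (by positivity) _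
  calc |(∑ i ∈ Finset.Icc 1 (n - 1), jn H σ n i * x i) + gn H σ n * x n|
      ≤ |∑ i ∈ Finset.Icc 1 (n - 1), jn H σ n i * x i| + |gn H σ n * x n| := abs_add_le _ _
    _ ≤ (∑ i ∈ Finset.Icc 1 (n - 1), |jn H σ n i * x i|) + |gn H σ n * x n| :=
        add_le_add_left (Finset.abs_sum_le_sum_abs _ _) _
    _ = (∑ i ∈ Finset.Icc 1 (n - 1), |jn H σ n i|) + |gn H σ n| := by
        simp only [abs_mul, hxabs, mul_one]
    _ ≤ (∑ i ∈ Finset.Icc 1 (n - 1),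
          σ * cH H * (n:ℝ) ^ (H - 1/2) * ∫ t in ((i:ℝ) - 1)..(i:ℝ), Gf H ((n:ℝ) - 1) t)
        + σ * cH H / (H + 1/2) * (n:ℝ) ^ (H - 1/2) := by
        apply add_le_add _ (gn_abs_le hH hσ hn)
        apply Finset.sum_le_sum
        intro i hi
        obtain ⟨hi1, hi2⟩ := Finset.mem_Icc.mp hi
        exact jn_abs_le hH hσ hn hi1 hi2
    _ = σ * cH H * (n:ℝ) ^ (H - 1/2) * (∫ t in (0:ℝ)..((n:ℝ) - 1), Gf H ((n:ℝ) - 1) t)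
        + σ * cH H / (H + 1/2) * (n:ℝ) ^ (H - 1/2) := by
        rw [← Finset.mul_sum, sum_int_Gf hH hn]
    _ ≤ σ * cH H * (n:ℝ) ^ (H - 1/2) * (1 / (3/2 - H))
        + σ * cH H / (H + 1/2) * (n:ℝ) ^ (H - 1/2) := by
        apply add_le_add_left
        exact mul_le_mul_of_nonneg_left (E_bound hH (by linarith)) (by positivity)
    _ = (σ * cH H / (3/2 - H) + σ * cH H / (H + 1/2)) * (n : ℝ) ^ (H - 1/2) := by ring
end

section
/- Let n ≥ 2 be an integer and assume that ∑_{i=1}^{n−1} j_n(i)² ≤ σ²·(1 − c_H²/(H+1/2)²). Then the number of sign vectors x ∈ {−1,1}^{n−1} satisfying |∑_{i=1}^{n−1} j_n(i)·x_i| ≥ g_n is at most 2^{n−1}·((H+1/2)²/c_H² − 1). (In particular, the proportion of arbitrage points at level n in the fractional binary market is at most (H+1/2)²/c_H² − 1.) -/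
open MeasureTheory

lemma cH_pos {H : ℝ} (hH : H ∈ Set.Ioo (1/2 : ℝ) 1) : 0 < cH H := by
  obtain ⟨h1, h2⟩ := hH
  apply Real.sqrt_pos.mpr
  apply div_pos
  · exact mul_pos (by linarith) (Real.Gamma_pos_of_pos (by linarith))
  · exact mul_pos (Real.Gamma_pos_of_pos (by linarith)) (Real.Gamma_pos_of_pos (by linarith))

lemma measurable_rpow_const' (r : ℝ) : Measurable (fun y : ℝ => y ^ r) := by
  have h : (fun y : ℝ => y ^ r) = fun y =>
      if y = 0 then (if r = 0 then 1 else 0)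
      else Real.exp (Real.log y * r) * (if y < 0 then Real.cos (r * Real.pi) else 1) := by
    funext y
    rcases lt_trichotomy y 0 with h | h | h
    · rw [if_neg h.ne, if_pos h, Real.rpow_def_of_neg h]
    · subst h
      by_cases hr : r = 0
      · simp [hr]
      · simp [Real.zero_rpow hr, hr]
    · rw [if_neg h.ne', if_neg (not_lt.mpr h.le), mul_one, Real.rpow_def_of_pos h]
  rw [h]
  exact Measurable.ite (measurableSet_eq) measurable_const
    ((Real.measurable_exp.comp (Real.measurable_log.mul_const r)).mul
      (Measurable.ite (measurableSet_lt measurable_id measurable_const)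
        measurable_const measurable_const))

set_option maxHeartbeats 1000000 in
lemma gn_lower {H σ : ℝ} (hH : H ∈ Set.Ioo (1/2 : ℝ) 1) (hσ : 0 < σ) {n : ℕ} (hn : 2 ≤ n) :
    σ * cH H / (H + 1/2) ≤ gn H σ n := by
  obtain ⟨h1, h2⟩ := hH
  have hcH := cH_pos ⟨h1, h2⟩
  set N : ℝ := (n : ℝ) with hNdef
  have hN : 2 ≤ N := by rw [hNdef]; exact_mod_cast hn
  have hp : (0:ℝ) < H - 1/2 := by linarith
  have hq : (-1:ℝ) < H - 3/2 := by linarith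
  -- the inner integral bound function
  have hbound_int : IntervalIntegrable (fun y : ℝ => N ^ (H - 1/2) * y ^ (H - 3/2))
      volume 0 1 := (intervalIntegral.intervalIntegrable_rpow' hq).const_mul _
  have hrpow_val : (∫ y in (0:ℝ)..1, y ^ (H - 3/2)) = 1 / (H - 1/2) := by
    rw [integral_rpow (Or.inl hq), Real.one_rpow, Real.zero_rpow (by linarith),
      sub_zero, show H - 3/2 + 1 = H - 1/2 from by ring]
  -- integrability of the inner integrand, for x ∈ [N-1, N]
  have hF_int : ∀ x : ℝ, x ∈ Set.Icc (N - 1) N →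
      IntervalIntegrable (fun y : ℝ => (y * (N - x) + x) ^ (H - 1/2) * y ^ (H - 3/2))
        volume 0 1 := by
    intro x hx
    obtain ⟨hxl, hxr⟩ := hx
    have hx1 : (1:ℝ) ≤ x := by linarith
    have hbi := hbound_int
    rw [intervalIntegrable_iff_integrableOn_Ioc_of_le zero_le_one] at hbi ⊢
    refine Integrable.mono hbi ?_ ?_
    · exact ((((measurable_rpow_const' (H - 1/2)).comp
        ((measurable_id.mul_const (N - x)).add_const x)).mul
        (measurable_rpow_const' (H - 3/2)))).aestronglyMeasurable
    · rw [ae_restrict_iff' measurableSet_Ioc]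
      filter_upwards with y hy
      obtain ⟨hy0, hy1⟩ := hy
      have hbase0 : (0:ℝ) ≤ y * (N - x) + x := by nlinarith
      have hbaseN : y * (N - x) + x ≤ N := by nlinarith
      rw [Real.norm_eq_abs, Real.norm_eq_abs,
        abs_of_nonneg (mul_nonneg (Real.rpow_nonneg hbase0 _) (Real.rpow_nonneg hy0.le _)),
        abs_of_nonneg (mul_nonneg (Real.rpow_nonneg (by linarith) _) (Real.rpow_nonneg hy0.le _))]
      exact mul_le_mul_of_nonneg_right (Real.rpow_le_rpow hbase0 hbaseN hp.le)
        (Real.rpow_nonneg hy0.le _)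
  -- lower bound on the inner integral
  have hFi_lower : ∀ x : ℝ, x ∈ Set.Icc (N - 1) N →
      x ^ (H - 1/2) * (1 / (H - 1/2)) ≤
        ∫ y in (0:ℝ)..1, (y * (N - x) + x) ^ (H - 1/2) * y ^ (H - 3/2) := by
    intro x hx
    obtain ⟨hxl, hxr⟩ := hx
    have hx1 : (1:ℝ) ≤ x := by linarith
    have hlow : IntervalIntegrable (fun y : ℝ => x ^ (H - 1/2) * y ^ (H - 3/2)) volume 0 1 :=
      (intervalIntegral.intervalIntegrable_rpow' hq).const_mul _
    have hmono := intervalIntegral.integral_mono_on zero_le_one hlow (hF_int x ⟨hxl, hxr⟩)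
      (fun y hy => by
        obtain ⟨hy0, hy1⟩ := hy
        have hle : x ≤ y * (N - x) + x := le_add_of_nonneg_left (mul_nonneg hy0 (by linarith))
        exact mul_le_mul_of_nonneg_right
          (Real.rpow_le_rpow (by linarith) hle hp.le) (Real.rpow_nonneg hy0 _))
    calc x ^ (H - 1/2) * (1 / (H - 1/2))
        = ∫ y in (0:ℝ)..1, x ^ (H - 1/2) * y ^ (H - 3/2) := by
          rw [intervalIntegral.integral_const_mul, hrpow_val]
      _ ≤ _ := hmono
  -- upper bound on the inner integral
  have hFi_upper : ∀ x : ℝ, x ∈ Set.Icc (N - 1) N →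
      |∫ y in (0:ℝ)..1, (y * (N - x) + x) ^ (H - 1/2) * y ^ (H - 3/2)|
        ≤ N ^ (H - 1/2) * (1 / (H - 1/2)) := by
    intro x hx
    obtain ⟨hxl, hxr⟩ := hx
    have hx1 : (1:ℝ) ≤ x := by linarith
    have h := intervalIntegral.norm_integral_le_abs_of_norm_le (μ := volume)
      (f := fun y : ℝ => (y * (N - x) + x) ^ (H - 1/2) * y ^ (H - 3/2))
      (g := fun y : ℝ => N ^ (H - 1/2) * y ^ (H - 3/2)) (a := 0) (b := 1) ?_ hbound_int
    · rw [Real.norm_eq_abs] at h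
      refine h.trans ?_
      rw [intervalIntegral.integral_const_mul, hrpow_val]
      exact le_of_eq (abs_of_nonneg (mul_nonneg (Real.rpow_nonneg (by linarith) _)
        (by positivity)))
    · rw [Set.uIoc_of_le zero_le_one, ae_restrict_iff' measurableSet_Ioc]
      filter_upwards with y hy
      obtain ⟨hy0, hy1⟩ := hy
      have hbase0 : (0:ℝ) ≤ y * (N - x) + x := by nlinarith
      have hbaseN : y * (N - x) + x ≤ N := by nlinarith
      rw [Real.norm_eq_abs,
        abs_of_nonneg (mul_nonneg (Real.rpow_nonneg hbase0 _) (Real.rpow_nonneg hy0.le _))]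
      exact mul_le_mul_of_nonneg_right (Real.rpow_le_rpow hbase0 hbaseN hp.le)
        (Real.rpow_nonneg hy0.le _)
  -- the outer integrand
  set G : ℝ → ℝ := fun x => x ^ ((1:ℝ)/2 - H) * (N - x) ^ (H - 1/2) *
      ∫ y in (0:ℝ)..1, (y * (N - x) + x) ^ (H - 1/2) * y ^ (H - 3/2) with hGdef
  -- measurability of G
  have hG_meas : AEStronglyMeasurable G volume := by
    have hpair : StronglyMeasurable
        (fun p : ℝ × ℝ => (p.2 * (N - p.1) + p.1) ^ (H - 1/2) * p.2 ^ (H - 3/2)) :=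
      (((measurable_rpow_const' (H - 1/2)).comp
          ((measurable_snd.mul (measurable_const.sub measurable_fst)).add
            measurable_fst)).mul
        ((measurable_rpow_const' (H - 3/2)).comp measurable_snd)).stronglyMeasurable
    have hI : StronglyMeasurable (fun x : ℝ =>
        ∫ y in Set.Ioc (0:ℝ) 1, (y * (N - x) + x) ^ (H - 1/2) * y ^ (H - 3/2)) :=
      hpair.integral_prod_right'
    have heq : (fun x : ℝ =>
        ∫ y in (0:ℝ)..1, (y * (N - x) + x) ^ (H - 1/2) * y ^ (H - 3/2)) =
        fun x : ℝ => ∫ y in Set.Ioc (0:ℝ) 1, (y * (N - x) + x) ^ (H - 1/2) * y ^ (H - 3/2) := by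
      funext x
      rw [intervalIntegral.integral_of_le zero_le_one]
    have hImeas : Measurable (fun x : ℝ =>
        ∫ y in (0:ℝ)..1, (y * (N - x) + x) ^ (H - 1/2) * y ^ (H - 3/2)) := by
      rw [heq]; exact hI.measurable
    exact Measurable.aestronglyMeasurable
      (((measurable_rpow_const' ((1:ℝ)/2 - H)).mul
        ((measurable_rpow_const' (H - 1/2)).comp (measurable_const.sub measurable_id))).mul
        hImeas)
  -- integrability of G
  have hG_int : IntervalIntegrable G volume (N - 1) N := by
    rw [intervalIntegrable_iff_integrableOn_Ioc_of_le (by linarith : N - 1 ≤ N)]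
    refine Measure.integrableOn_of_bounded (measure_Ioc_lt_top).ne hG_meas
      (M := N ^ (H - 1/2) * (1 / (H - 1/2))) ?_
    rw [ae_restrict_iff' measurableSet_Ioc]
    filter_upwards with x hx
    obtain ⟨hxl, hxr⟩ := hx
    have hx1 : (1:ℝ) ≤ x := by linarith
    have h1' : x ^ ((1:ℝ)/2 - H) ≤ 1 :=
      Real.rpow_le_one_of_one_le_of_nonpos hx1 (by linarith)
    have h2' : (N - x) ^ (H - 1/2) ≤ 1 :=
      Real.rpow_le_one (by linarith) (by linarith) hp.le
    have h3' := hFi_upper x ⟨hxl.le, hxr⟩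
    rw [Real.norm_eq_abs, hGdef]
    simp only [abs_mul]
    rw [abs_of_nonneg (Real.rpow_nonneg (by linarith : (0:ℝ) ≤ x) _),
      abs_of_nonneg (Real.rpow_nonneg (by linarith : (0:ℝ) ≤ N - x) _)]
    have hmul1 : x ^ ((1:ℝ)/2 - H) * (N - x) ^ (H - 1/2) ≤ 1 :=
      mul_le_one₀ h1' (Real.rpow_nonneg (by linarith) _) h2'
    refine le_trans (mul_le_mul hmul1 h3' (abs_nonneg _) zero_le_one) ?_
    rw [one_mul]
  -- the lower comparison function
  have hlow_int : IntervalIntegrable (fun x : ℝ => (N - x) ^ (H - 1/2) * (1 / (H - 1/2)))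
      volume (N - 1) N :=
    (((continuous_const.sub continuous_id).rpow_const fun x => Or.inr hp.le).mul
      continuous_const).intervalIntegrable _ _
  -- pointwise comparison
  have hpoint : ∀ x ∈ Set.Icc (N - 1) N,
      (N - x) ^ (H - 1/2) * (1 / (H - 1/2)) ≤ G x := by
    intro x hx
    obtain ⟨hxl, hxr⟩ := hx
    have hx1 : (1:ℝ) ≤ x := by linarith
    have hx0 : (0:ℝ) < x := by linarith
    have key : x ^ ((1:ℝ)/2 - H) * x ^ (H - 1/2) = 1 := by
      rw [← Real.rpow_add hx0]
      norm_num
    have hc0 : 0 ≤ x ^ ((1:ℝ)/2 - H) * (N - x) ^ (H - 1/2) :=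
      mul_nonneg (Real.rpow_nonneg hx0.le _) (Real.rpow_nonneg (by linarith) _)
    have heq : x ^ ((1:ℝ)/2 - H) * (N - x) ^ (H - 1/2) * (x ^ (H - 1/2) * (1 / (H - 1/2)))
        = (N - x) ^ (H - 1/2) * (1 / (H - 1/2)) := by
      rw [show x ^ ((1:ℝ)/2 - H) * (N - x) ^ (H - 1/2) * (x ^ (H - 1/2) * (1 / (H - 1/2)))
          = (x ^ ((1:ℝ)/2 - H) * x ^ (H - 1/2)) * ((N - x) ^ (H - 1/2) * (1 / (H - 1/2)))
          from by ring, key, one_mul]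
    rw [← heq]
    exact mul_le_mul_of_nonneg_left (hFi_lower x ⟨hxl, hxr⟩) hc0
  -- value of the comparison integral
  have hout_val : (∫ x in (N-1)..N, (N - x) ^ (H - 1/2) * (1 / (H - 1/2)))
      = 1 / (H + 1/2) * (1 / (H - 1/2)) := by
    rw [intervalIntegral.integral_mul_const]
    congr 1
    have := intervalIntegral.integral_comp_sub_left (a := N - 1) (b := N)
      (fun u : ℝ => u ^ (H - 1/2)) N
    rw [this, show N - N = (0:ℝ) from by ring, show N - (N - 1) = (1:ℝ) from by ring,
      integral_rpow (Or.inl (by linarith)), Real.one_rpow,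
      Real.zero_rpow (by linarith), sub_zero, show H - 1/2 + 1 = H + 1/2 from by ring,
      one_div]
  -- put it together
  have hmono := intervalIntegral.integral_mono_on (by linarith : N - 1 ≤ N)
    hlow_int hG_int hpoint
  rw [hout_val] at hmono
  have hfactor : 0 ≤ σ * cH H * (H - 1/2) :=
    le_of_lt (mul_pos (mul_pos hσ hcH) hp)
  have := mul_le_mul_of_nonneg_left hmono hfactor
  calc σ * cH H / (H + 1/2)
      = σ * cH H * (H - 1/2) * (1 / (H + 1/2) * (1 / (H - 1/2))) := by
        have hne1 : H + 1/2 ≠ 0 := by linarith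
        have hne2 : H - 1/2 ≠ 0 := by linarith
        have hne3 : H * 2 + 1 ≠ 0 := by intro h; apply hne1; linarith
        have hne4 : H * 2 - 1 ≠ 0 := by intro h; apply hne2; linarith
        field_simp
    _ ≤ σ * cH H * (H - 1/2) * ∫ x in (N-1)..N, G x := this
    _ = gn H σ n := rfl

lemma orth (m : ℕ) (i k : Fin m) :
    ∑ x ∈ Fintype.piFinset (fun _ : Fin m => ({-1,1} : Finset ℝ)), x i * x k
      = if i = k then (2:ℝ)^m else 0 := by
  have h := Finset.prod_univ_sum (fun _ : Fin m => ({-1,1} : Finset ℝ))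
      (fun i' (a : ℝ) => (if i' = i then a else 1) * (if i' = k then a else 1))
  have h2 : ∑ x ∈ Fintype.piFinset (fun _ : Fin m => ({-1,1} : Finset ℝ)), x i * x k
      = ∏ i' : Fin m, ∑ a ∈ ({-1,1} : Finset ℝ),
          (if i' = i then a else 1) * (if i' = k then a else 1) := by
    rw [h]
    refine Finset.sum_congr rfl fun x _ => ?_
    rw [Finset.prod_mul_distrib]
    simp [Finset.prod_ite_eq']
  rw [h2]
  have hne : (-1 : ℝ) ≠ 1 := by norm_num
  by_cases hik : i = k
  · subst hik
    rw [if_pos rfl]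
    have hfac : ∀ i' : Fin m, (∑ a ∈ ({-1,1} : Finset ℝ),
        (if i' = i then a else 1) * (if i' = i then a else 1)) = 2 := by
      intro i'
      by_cases hi : i' = i <;> simp [hi, Finset.sum_pair hne] <;> norm_num
    rw [Finset.prod_congr rfl fun i' _ => hfac i']
    simp
  · rw [if_neg hik]
    apply Finset.prod_eq_zero (Finset.mem_univ i)
    simp [hik, Finset.sum_pair hne]


lemma sum_fin_eq_sum_Icc (f : ℕ → ℝ) (n : ℕ) (hn : 2 ≤ n) :
    ∑ i : Fin (n-1), (f ((i:ℕ)+1))^2 = ∑ i ∈ Finset.Icc 1 (n-1), (f i)^2 := by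
  rw [Fin.sum_univ_eq_sum_range (fun i => (f (i+1))^2),
    show Finset.Icc 1 (n-1) = Finset.Ico 1 n from by
      rw [← Finset.Ico_add_one_right_eq_Icc, Nat.sub_add_cancel (by omega)],
    Finset.sum_Ico_eq_sum_range]
  simp [add_comm]

/-- Lemma 5.4 (`apap`), quantitative form: under the variance bound
`∑_{i=1}^{n-1} j_n(i)² ≤ σ² (1 - c_H²/(H+1/2)²)`, the number of sign vectors
`x ∈ {-1,1}^{n-1}` with `|∑_{i=1}^{n-1} j_n(i) x_i| ≥ g_n` (the arbitrage points at
level `n`) is at most `2^{n-1} ((H+1/2)²/c_H² - 1)`. -/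
theorem arbitrage_points_bound (H σ : ℝ) (hH : H ∈ Set.Ioo (1/2 : ℝ) 1) (hσ : 0 < σ)
    (n : ℕ) (hn : 2 ≤ n)
    (hvar : ∑ i ∈ Finset.Icc 1 (n - 1), (jn H σ n i) ^ 2
      ≤ σ ^ 2 * (1 - (cH H) ^ 2 / (H + 1/2) ^ 2)) :
    (Nat.card {x : Fin (n - 1) → ℝ // (∀ i, x i = -1 ∨ x i = 1) ∧
        gn H σ n ≤ |∑ i : Fin (n - 1), jn H σ n ((i : ℕ) + 1) * x i|} : ℝ)
      ≤ 2 ^ (n - 1) * ((H + 1/2) ^ 2 / (cH H) ^ 2 - 1) := by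
  obtain ⟨h1, h2⟩ := hH
  have hcH : 0 < cH H := cH_pos ⟨h1, h2⟩
  have hH12 : (0:ℝ) < H + 1/2 := by linarith
  -- lower bound for gn
  have hglow : σ * cH H / (H + 1/2) ≤ gn H σ n := gn_lower ⟨h1, h2⟩ hσ hn
  have hspos : 0 < σ * cH H / (H + 1/2) := by positivity
  have hg0 : 0 ≤ gn H σ n := le_trans hspos.le hglow
  -- the finite set of arbitrage points
  set T : (Fin (n - 1) → ℝ) → ℝ := fun x => ∑ i : Fin (n - 1), jn H σ n ((i : ℕ) + 1) * x i
    with hT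
  set A : Finset (Fin (n - 1) → ℝ) :=
    (Fintype.piFinset fun _ : Fin (n - 1) => ({-1,1} : Finset ℝ)).filter
      (fun x => gn H σ n ≤ |T x|) with hA
  have hcard : (Nat.card {x : Fin (n - 1) → ℝ // (∀ i, x i = -1 ∨ x i = 1) ∧
      gn H σ n ≤ |∑ i : Fin (n - 1), jn H σ n ((i : ℕ) + 1) * x i|}) = A.card := by
    rw [Nat.card_congr (Equiv.subtypeEquivRight (q := fun x => x ∈ A) (fun x => ?_)),
      Nat.card_eq_finsetCard]
    simp only [hA, Finset.mem_filter, Fintype.mem_piFinset, Finset.mem_insert,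
      Finset.mem_singleton, hT]
  -- the sum of squares identity
  have hsum : ∑ x ∈ Fintype.piFinset (fun _ : Fin (n - 1) => ({-1,1} : Finset ℝ)), (T x)^2
      = 2^(n-1) * ∑ i : Fin (n - 1), (jn H σ n ((i : ℕ) + 1))^2 := by
    calc ∑ x ∈ Fintype.piFinset (fun _ : Fin (n - 1) => ({-1,1} : Finset ℝ)), (T x)^2
        = ∑ x ∈ Fintype.piFinset (fun _ : Fin (n - 1) => ({-1,1} : Finset ℝ)),
            ∑ i : Fin (n - 1), ∑ k : Fin (n - 1),
              (jn H σ n ((i : ℕ) + 1) * jn H σ n ((k : ℕ) + 1)) * (x i * x k) := by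
          refine Finset.sum_congr rfl fun x _ => ?_
          rw [hT, pow_two, Finset.sum_mul_sum]
          exact Finset.sum_congr rfl fun i _ => Finset.sum_congr rfl fun k _ => by ring
      _ = ∑ i : Fin (n - 1), ∑ k : Fin (n - 1),
            (jn H σ n ((i : ℕ) + 1) * jn H σ n ((k : ℕ) + 1)) *
            ∑ x ∈ Fintype.piFinset (fun _ : Fin (n - 1) => ({-1,1} : Finset ℝ)), x i * x k := by
          rw [Finset.sum_comm]
          refine Finset.sum_congr rfl fun i _ => ?_
          rw [Finset.sum_comm]
          exact Finset.sum_congr rfl fun k _ => by rw [Finset.mul_sum]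
      _ = ∑ i : Fin (n - 1),
            (jn H σ n ((i : ℕ) + 1) * jn H σ n ((i : ℕ) + 1)) * (2:ℝ)^(n-1) := by
          refine Finset.sum_congr rfl fun i _ => ?_
          rw [Finset.sum_congr rfl fun k (_ : k ∈ Finset.univ) => by rw [orth (n-1) i k]]
          simp only [mul_ite, mul_zero]
          rw [Finset.sum_ite_eq]
          simp
      _ = 2^(n-1) * ∑ i : Fin (n - 1), (jn H σ n ((i : ℕ) + 1))^2 := by
          rw [Finset.mul_sum]
          exact Finset.sum_congr rfl fun i _ => by ring
  -- reindexing
  have hIcc : ∑ i : Fin (n-1), (jn H σ n ((i:ℕ)+1))^2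
      = ∑ i ∈ Finset.Icc 1 (n-1), (jn H σ n i)^2 := sum_fin_eq_sum_Icc _ n hn
  -- counting bound
  have hcount : (A.card : ℝ) * (gn H σ n)^2
      ≤ 2^(n-1) * (σ^2 * (1 - (cH H)^2/(H + 1/2)^2)) := by
    calc (A.card : ℝ) * (gn H σ n)^2
        ≤ ∑ x ∈ A, (T x)^2 := by
          have h := Finset.card_nsmul_le_sum A (fun x => (T x)^2) ((gn H σ n)^2)
            (fun x hx => by
              rw [hA, Finset.mem_filter] at hx
              calc (gn H σ n)^2 ≤ |T x|^2 := pow_le_pow_left₀ hg0 hx.2 2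
                _ = (T x)^2 := sq_abs _)
          simpa [nsmul_eq_mul] using h
      _ ≤ ∑ x ∈ Fintype.piFinset (fun _ : Fin (n - 1) => ({-1,1} : Finset ℝ)), (T x)^2 :=
          Finset.sum_le_sum_of_subset_of_nonneg (Finset.filter_subset _ _)
            (fun x _ _ => sq_nonneg _)
      _ = 2^(n-1) * ∑ i : Fin (n - 1), (jn H σ n ((i : ℕ) + 1))^2 := hsum
      _ ≤ 2^(n-1) * (σ^2 * (1 - (cH H)^2/(H + 1/2)^2)) := by
          rw [hIcc]
          exact mul_le_mul_of_nonneg_left hvar (by positivity)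
  -- from the gn lower bound
  have hgsq : σ^2 * ((cH H)^2/(H + 1/2)^2) ≤ (gn H σ n)^2 := by
    calc σ^2 * ((cH H)^2/(H + 1/2)^2) = (σ * cH H / (H + 1/2))^2 := by
          rw [div_pow, mul_pow, mul_div_assoc]
      _ ≤ (gn H σ n)^2 := pow_le_pow_left₀ hspos.le hglow 2
  have hapos : 0 < σ^2 * ((cH H)^2/(H + 1/2)^2) := by positivity
  have hfinal : (A.card : ℝ) * (σ^2 * ((cH H)^2/(H + 1/2)^2))
      ≤ 2^(n-1) * (σ^2 * (1 - (cH H)^2/(H + 1/2)^2)) := by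
    refine le_trans ?_ hcount
    exact mul_le_mul_of_nonneg_left hgsq (Nat.cast_nonneg _)
  rw [hcard]
  rw [← le_div_iff₀ hapos] at hfinal
  refine hfinal.trans (le_of_eq ?_)
  have hσne : σ ≠ 0 := hσ.ne'
  have hcne : cH H ≠ 0 := hcH.ne'
  have hHne : H + 1/2 ≠ 0 := hH12.ne'
  field_simp
end

section
/- Fix an integer n ≥ 1, an integer N ≥ n+1, s₀ > 0, and assume S_n^{(N)}(x) > 0 for every x ∈ {−1,1}^n. Let A ⊆ {−1,1}^n, let q : {−1,1}^n → [0,∞), let α > 0, and define ε(x) := 1 if x ∈ A and ε(x) := −1 otherwise. For (x,ξ) ∈ {−1,1}^n × {−1,1} define V(x,ξ) := −ε(x)·q(x)·S_n^{(N)}(x)·(∑_{i=1}^{n} j_{n+1}(i)·x_i + g_{n+1}·ξ)/N^H. Then the number of pairs (x,ξ) ∈ {−1,1}^n × {−1,1} with V(x,ξ) ≥ α is at most 2^n + #{x ∈ {−1,1}^n : |∑_{i=1}^{n} j_{n+1}(i)·x_i| ≥ g_{n+1}}. (Hence, under the uniform measure on {−1,1}^{n+1}, the probability that a 1-step frictionless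 strategy's terminal value is at least α is at most (1 + ν_H)/2, where ν_H := sup_m #{x ∈ {−1,1}^{m−1} : |∑_{i=1}^{m−1} j_m(i)x_i| ≥ g_m}/2^{m−1}; so if ν_H < 1 there is no 1-step asymptotic arbitrage of the second kind in the frictionless fractional binary markets.) -/
open MeasureTheory

/-- The stock price in the `N`-fractional binary market along a sign vector
`x ∈ {-1,1}^n` (Fin-indexed):
`S_n^{(N)}(x) = s₀ ∏_{k=1}^n (1 + (∑_{i=1}^{k-1} j_k(i) x_i + g_k x_k)/N^H)`. -/
noncomputable def SpF (H σ : ℝ) (N : ℕ) (s₀ : ℝ) {n : ℕ} (x : Fin n → ℝ) : ℝ :=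
  s₀ * ∏ k : Fin n,
    (1 + ((∑ i ∈ Finset.univ.filter (fun i : Fin n => (i : ℕ) < (k : ℕ)),
          jn H σ ((k : ℕ) + 1) ((i : ℕ) + 1) * x i)
        + gn H σ ((k : ℕ) + 1) * x k) / (N : ℝ) ^ H)

open scoped Classical in
/-- The key counting estimate in Theorem 5.5 (`aa2fc`): for a 1-step frictionless
strategy going short on `A` and long on `Aᶜ` with `q(x) ≥ 0` units of stock, the number
of scenarios `(x,ξ) ∈ {-1,1}^n × {-1,1}` in which the terminal value
`V(x,ξ) = -ε(x) q(x) S_n^{(N)}(x) (∑_{i=1}^n j_{n+1}(i) x_i + g_{n+1} ξ)/N^H` is at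
least `α > 0` is bounded by `2^n` plus the number of arbitrage points at level `n+1`. -/
theorem one_step_value_counting (H σ : ℝ) (hH : H ∈ Set.Ioo (1/2 : ℝ) 1) (hσ : 0 < σ)
    (n N : ℕ) (hn : 1 ≤ n) (hN : n + 1 ≤ N) (s₀ : ℝ) (hs₀ : 0 < s₀)
    (hSpos : ∀ x : Fin n → ℝ, (∀ i, x i = -1 ∨ x i = 1) → 0 < SpF H σ N s₀ x)
    (A : Set (Fin n → ℝ)) (q : (Fin n → ℝ) → ℝ) (hq : ∀ x, 0 ≤ q x)
    (α : ℝ) (hα : 0 < α) :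
    Nat.card {p : (Fin n → ℝ) × ℝ //
        (∀ i, p.1 i = -1 ∨ p.1 i = 1) ∧ (p.2 = -1 ∨ p.2 = 1) ∧
        α ≤ -(if p.1 ∈ A then (1:ℝ) else -1) * q p.1 * SpF H σ N s₀ p.1 *
            (((∑ i : Fin n, jn H σ (n + 1) ((i : ℕ) + 1) * p.1 i)
              + gn H σ (n + 1) * p.2) / (N : ℝ) ^ H)}
      ≤ 2 ^ n + Nat.card {x : Fin n → ℝ //
          (∀ i, x i = -1 ∨ x i = 1) ∧
          gn H σ (n + 1) ≤ |∑ i : Fin n, jn H σ (n + 1) ((i : ℕ) + 1) * x i|} := by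
  classical
  -- abbreviations
  set g : ℝ := gn H σ (n + 1) with hg
  set J : (Fin n → ℝ) → ℝ :=
    fun x => ∑ i : Fin n, jn H σ (n + 1) ((i : ℕ) + 1) * x i with hJdef
  have hN0 : (0:ℝ) < (N : ℝ) ^ H := by
    have : 0 < N := by omega
    exact Real.rpow_pos_of_pos (by exact_mod_cast this) H
  -- key sign analysis: if both ξ = 1 and ξ = -1 give value ≥ α > 0, then g ≤ |S|
  have key : ∀ (C S G NH : ℝ), 0 < NH → α ≤ C * ((S + G * 1) / NH) →
      α ≤ C * ((S + G * (-1)) / NH) → G ≤ |S| := by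
    intro C S G NH hNH h1 h2
    by_contra hlt
    push_neg at hlt
    rw [abs_lt] at hlt
    have e1 : C * ((S + G * 1) / NH) = (C / NH) * (S + G) := by ring
    have e2 : C * ((S + G * (-1)) / NH) = (C / NH) * (S - G) := by ring
    have h1' : 0 < (C / NH) * (S + G) := lt_of_lt_of_le hα (e1 ▸ h1)
    have h2' : 0 < (C / NH) * (S - G) := lt_of_lt_of_le hα (e2 ▸ h2)
    have hpos : 0 < S + G := by linarith [hlt.1]
    have hneg : S - G < 0 := by linarith [hlt.2]
    nlinarith [mul_pos h1' (show (0:ℝ) < G - S by linarith), mul_pos h2' hpos]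
  -- the target types
  have hSignFin : Finite {x : Fin n → ℝ // ∀ i, x i = -1 ∨ x i = 1} := by
    apply Finite.of_injective
      (fun x : {x : Fin n → ℝ // ∀ i, x i = -1 ∨ x i = 1} =>
        (fun i => x.1 i = 1 : Fin n → Prop))
    intro x y hxy
    ext i
    have h := congrFun hxy i
    rcases x.2 i with hx | hx <;> rcases y.2 i with hy | hy <;>
      simp only [hx, hy] at h ⊢ <;> first | rfl | (exfalso; simp at h <;> norm_num at h <;> tauto)
  have hBadFin : Finite {x : Fin n → ℝ //
      (∀ i, x i = -1 ∨ x i = 1) ∧ g ≤ |J x|} := by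
    apply Finite.of_injective
      (fun x : {x : Fin n → ℝ // (∀ i, x i = -1 ∨ x i = 1) ∧ g ≤ |J x|} =>
        (⟨x.1, x.2.1⟩ : {x : Fin n → ℝ // ∀ i, x i = -1 ∨ x i = 1}))
    intro x y hxy
    rw [Subtype.ext_iff]
    simpa [Subtype.ext_iff] using hxy
  have hSignCard : Nat.card {x : Fin n → ℝ // ∀ i, x i = -1 ∨ x i = 1} = 2 ^ n := by
    have e : {x : Fin n → ℝ // ∀ i, x i = -1 ∨ x i = 1} ≃ (Fin n → Bool) :=
      { toFun := fun x i => decide (x.1 i = 1)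
        invFun := fun b => ⟨fun i => if b i then 1 else -1, fun i => by
          by_cases h : b i <;> simp [h]⟩
        left_inv := fun x => by
          ext i
          rcases x.2 i with h | h <;> simp [h] <;> norm_num
        right_inv := fun b => by
          ext i
          by_cases h : b i <;> simp [h] <;> norm_num }
    rw [Nat.card_congr e]
    simp [Nat.card_eq_fintype_card]
  -- the injection
  set P := {p : (Fin n → ℝ) × ℝ //
      (∀ i, p.1 i = -1 ∨ p.1 i = 1) ∧ (p.2 = -1 ∨ p.2 = 1) ∧
      α ≤ -(if p.1 ∈ A then (1:ℝ) else -1) * q p.1 * SpF H σ N s₀ p.1 *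
          ((J p.1 + g * p.2) / (N : ℝ) ^ H)} with hP
  set Bad := {x : Fin n → ℝ // (∀ i, x i = -1 ∨ x i = 1) ∧ g ≤ |J x|} with hBad
  set Sign := {x : Fin n → ℝ // ∀ i, x i = -1 ∨ x i = 1} with hSign
  let F : P → Sign ⊕ Bad := fun p =>
    if h : g ≤ |J p.1.1| ∧ p.1.2 = -1 then Sum.inr ⟨p.1.1, p.2.1, h.1⟩
    else Sum.inl ⟨p.1.1, p.2.1⟩
  have hFinj : Function.Injective F := by
    rintro ⟨⟨x, ξ⟩, hx, hξ, hv⟩ ⟨⟨x', ξ'⟩, hx', hξ', hv'⟩ hEq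
    simp only [F] at hEq
    by_cases h : g ≤ |J x| ∧ ξ = -1 <;> by_cases h' : g ≤ |J x'| ∧ ξ' = -1
    · -- both inr : x = x', ξ = ξ' = -1
      rw [dif_pos h, dif_pos h'] at hEq
      have hxx : x = x' := congrArg Subtype.val (Sum.inr_injective hEq)
      subst hxx
      exact Subtype.ext (Prod.ext rfl (h.2.trans h'.2.symm))
    · rw [dif_pos h, dif_neg h'] at hEq
      exact absurd hEq (by simp)
    · rw [dif_neg h, dif_pos h'] at hEq
      exact absurd hEq (by simp)
    · -- both inl
      rw [dif_neg h, dif_neg h'] at hEq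
      have hxx : x = x' := congrArg Subtype.val (Sum.inl_injective hEq)
      subst hxx
      refine Subtype.ext (Prod.ext rfl ?_)
      by_contra hne
      -- ξ ≠ ξ', both in {-1,1}: one is 1 and the other -1
      have hbad : g ≤ |J x| := by
        rcases hξ with h1 | h1 <;> rcases hξ' with h2 | h2
        · exact absurd (h1.trans h2.symm) hne
        · rw [h1] at hv; rw [h2] at hv'
          exact key _ (J x) g _ hN0 hv' hv
        · rw [h1] at hv; rw [h2] at hv'
          exact key _ (J x) g _ hN0 hv hv'
        · exact absurd (h1.trans h2.symm) hne
      rcases hξ with h1 | h1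
      · exact h ⟨hbad, h1⟩
      · rcases hξ' with h2 | h2
        · exact h' ⟨hbad, h2⟩
        · exact hne (h1.trans h2.symm)
  calc Nat.card P ≤ Nat.card (Sign ⊕ Bad) := Nat.card_le_card_of_injective F hFinj
    _ = Nat.card Sign + Nat.card Bad := Nat.card_sum
    _ = 2 ^ n + Nat.card Bad := by rw [hSignCard]
end
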